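/- arXiv:2407.19539 — 6 statements merged into one kernel-verified Lean document; each statement's English description precedes it below -/
import Mathlib

section
/- For a single Blaschke factor f(z) = (z+a)/(1+z·conj(a)) with |a|<1, and for 0<t<1, the area of the superlevel set {z in the unit disk : |f(z)|>t} equals π(1−t²)(1−|a|⁴t²)/(1−|a|²t²)². -/
open MeasureTheory Complex ComplexConjugate

theorem blaschke_factor_superlevel_area (a : ℂ) (ha : ‖a‖ < 1) (t : ℝ)
    (ht : t ∈ Set.Ioo (0:ℝ) 1) :
    volume {z : ℂ | ‖z‖ < 1 ∧ t < ‖(z + a) / (1 + z * conj a)‖} =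
      ENNReal.ofReal (Real.pi * (1 - t ^ 2) * (1 - ‖a‖ ^ 4 * t ^ 2) /
        (1 - ‖a‖ ^ 2 * t ^ 2) ^ 2) := by
  obtain ⟨ht0, ht1⟩ := ht
  set s : ℝ := ‖a‖ with hs
  have hs0 : 0 ≤ s := norm_nonneg a
  have hst : 0 < 1 - s * t := by nlinarith
  set d : ℝ := 1 - s ^ 2 * t ^ 2 with hd
  have hd0 : 0 < d := by
    have h0 : 0 ≤ s * t := mul_nonneg hs0 ht0.le
    nlinarith [hst, h0]
  have hne : (1:ℝ) - s ^ 2 * t ^ 2 ≠ 0 := by rw [← hd]; exact hd0.ne'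
  set k : ℝ := (1 - t ^ 2) / d with hk
  set r : ℝ := t * (1 - s ^ 2) / d with hr
  have hk0 : 0 ≤ k := by
    rw [hk]; apply div_nonneg _ hd0.le; nlinarith
  have hr0 : 0 ≤ r := by
    rw [hr]; apply div_nonneg _ hd0.le
    apply mul_nonneg ht0.le; nlinarith
  set c : ℂ := -(k : ℂ) * a with hc
  clear_value s d k r c
  have hm : s ^ 2 = Complex.normSq a := by
    rw [hs, Complex.sq_norm]
  have hset : {z : ℂ | ‖z‖ < 1 ∧ t < ‖(z + a) / (1 + z * conj a)‖}
      = Metric.ball (0:ℂ) 1 \ Metric.closedBall c r := by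
    ext z
    simp only [Set.mem_setOf_eq, Set.mem_diff, Metric.mem_ball, Metric.mem_closedBall,
      dist_eq_norm, sub_zero, not_le]
    refine and_congr_right fun hz => ?_
    have h1 : ‖z * conj a‖ < 1 := by
      rw [norm_mul, RCLike.norm_conj, ← hs]
      nlinarith [norm_nonneg z]
    have hne0 : (1 + z * conj a) ≠ 0 := by
      intro h
      have h2 : z * conj a = -1 := by linear_combination h
      rw [h2] at h1
      simp at h1
    have hYpos : 0 < ‖1 + z * conj a‖ := norm_pos_iff.mpr hne0
    have hX : ‖z + a‖ ^ 2 = Complex.normSq z + Complex.normSq a + 2 * (z * conj a).re := by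
      rw [Complex.sq_norm, Complex.normSq_add]
    have hY : ‖1 + z * conj a‖ ^ 2
        = 1 + Complex.normSq z * Complex.normSq a + 2 * (z * conj a).re := by
      rw [Complex.sq_norm, Complex.normSq_add, Complex.normSq_one,
        Complex.normSq_mul, Complex.normSq_conj]
      simp [Complex.mul_re, Complex.conj_re, Complex.conj_im]
    have hW : ‖z - c‖ ^ 2
        = Complex.normSq z + k ^ 2 * Complex.normSq a + 2 * k * (z * conj a).re := by
      have h3 : z - c = z + (k : ℂ) * a := by rw [hc]; ring
      rw [h3, Complex.sq_norm, Complex.normSq_add, Complex.normSq_mul]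
      simp [Complex.normSq_ofReal, Complex.mul_re, Complex.conj_re, Complex.conj_im]
      ring
    have key : ‖z - c‖ ^ 2 * d ^ 2 - r ^ 2 * d ^ 2
        = d * (‖z + a‖ ^ 2 - t ^ 2 * ‖1 + z * conj a‖ ^ 2) := by
      rw [hX, hY, hW, ← hm, hr, hk, hd]
      field_simp [show (1:ℝ) - t ^ 2 * s ^ 2 ≠ 0 by rwa [mul_comm]]
      ring
    rw [norm_div, lt_div_iff₀ hYpos]
    constructor
    · intro h
      have hXpos : 0 < ‖z + a‖ := lt_of_le_of_lt (mul_nonneg ht0.le hYpos.le) h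
      have hsum : 0 < ‖z + a‖ + t * ‖1 + z * conj a‖ := by positivity
      have hprod := mul_pos (sub_pos.2 h) hsum
      have hexp : (‖z + a‖ - t * ‖1 + z * conj a‖) * (‖z + a‖ + t * ‖1 + z * conj a‖)
          = ‖z + a‖ ^ 2 - t ^ 2 * ‖1 + z * conj a‖ ^ 2 := by ring
      have ht2 : 0 < ‖z + a‖ ^ 2 - t ^ 2 * ‖1 + z * conj a‖ ^ 2 := by linarith
      have h2 : 0 < d * (‖z + a‖ ^ 2 - t ^ 2 * ‖1 + z * conj a‖ ^ 2) := mul_pos hd0 ht2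
      have h3' : (‖z - c‖ ^ 2 - r ^ 2) * (d * d)
          = d * (‖z + a‖ ^ 2 - t ^ 2 * ‖1 + z * conj a‖ ^ 2) := by linear_combination key
      have h3'' : 0 < (‖z - c‖ ^ 2 - r ^ 2) * (d * d) := by rw [h3']; exact h2
      have h3 : 0 < ‖z - c‖ ^ 2 - r ^ 2 := by
        by_contra hcon
        push_neg at hcon
        have hnp : (‖z - c‖ ^ 2 - r ^ 2) * (d * d) ≤ 0 :=
          mul_nonpos_iff.mpr (Or.inr ⟨hcon, (mul_pos hd0 hd0).le⟩)
        linarith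
      exact lt_of_pow_lt_pow_left₀ 2 (norm_nonneg _) (by linarith)
    · intro h
      have h3 : 0 < ‖z - c‖ ^ 2 - r ^ 2 :=
        sub_pos.2 (pow_lt_pow_left₀ h hr0 two_ne_zero)
      have h3'' : 0 < (‖z - c‖ ^ 2 - r ^ 2) * (d * d) := mul_pos h3 (mul_pos hd0 hd0)
      have h3' : (‖z - c‖ ^ 2 - r ^ 2) * (d * d)
          = d * (‖z + a‖ ^ 2 - t ^ 2 * ‖1 + z * conj a‖ ^ 2) := by linear_combination key
      rw [h3'] at h3''
      have h2 : 0 < ‖z + a‖ ^ 2 - t ^ 2 * ‖1 + z * conj a‖ ^ 2 := by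
        by_contra hcon
        push_neg at hcon
        have hnp : d * (‖z + a‖ ^ 2 - t ^ 2 * ‖1 + z * conj a‖ ^ 2) ≤ 0 :=
          mul_nonpos_iff.mpr (Or.inl ⟨hd0.le, hcon⟩)
        linarith
      have hexp : (t * ‖1 + z * conj a‖) ^ 2 = t ^ 2 * ‖1 + z * conj a‖ ^ 2 := by ring
      refine lt_of_pow_lt_pow_left₀ 2 (norm_nonneg _) ?_
      linarith
  have hcnorm : ‖c‖ = k * s := by
    rw [hc, norm_mul, norm_neg, Complex.norm_real, Real.norm_eq_abs, _root_.abs_of_nonneg hk0, ← hs]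
  have hrks : r + k * s < 1 := by
    have heq : r + k * s = (t * (1 - s ^ 2) + (1 - t ^ 2) * s) / d := by
      rw [hr, hk]; ring
    rw [heq, div_lt_one hd0, hd]
    nlinarith [mul_pos (mul_pos (sub_pos.2 ha) (sub_pos.2 ht1)) hst]
  have hsub : Metric.closedBall c r ⊆ Metric.ball (0:ℂ) 1 := by
    apply Metric.closedBall_subset_ball'
    rw [dist_zero_right, hcnorm]
    exact hrks
  have hrlt : r ^ 2 ≤ 1 := by
    nlinarith [hrks, mul_nonneg hk0 hs0, hr0]
  rw [hset, measure_diff hsub measurableSet_closedBall.nullMeasurableSet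
    measure_closedBall_lt_top.ne, Complex.volume_ball, Complex.volume_closedBall]
  have hπ : (NNReal.pi : ENNReal) = ENNReal.ofReal Real.pi := by
    rw [← ENNReal.ofReal_coe_nnreal, NNReal.coe_real_pi]
  rw [hπ, ← ENNReal.ofReal_pow hr0, ← ENNReal.ofReal_pow zero_le_one, one_pow,
    ← ENNReal.ofReal_mul (show (0:ℝ) ≤ 1 by norm_num),
    ← ENNReal.ofReal_mul (show (0:ℝ) ≤ r ^ 2 by positivity), one_mul,
    ← ENNReal.ofReal_sub _ (show (0:ℝ) ≤ r ^ 2 * Real.pi by positivity)]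
  congr 1
  rw [hr, hd]
  field_simp [show (1:ℝ) - t ^ 2 * s ^ 2 ≠ 0 by rwa [mul_comm]]
  ring
end

section
/- For |a|<1 and t ∈ [0,1], the integral ∫₀^{2π}∫_t^1 r·(1−|a|²)²/|1−re^{iτ}·conj(a)|⁴ dr dτ equals π(1−t²)(1−|a|⁴t²)/(1−|a|²t²)². -/
open Complex ComplexConjugate intervalIntegral

noncomputable def zc (θ : ℝ) : ℂ := Complex.exp (Complex.I * θ)

lemma hz (θ : ℝ) : HasDerivAt zc (Complex.I * zc θ) θ := by
  have h : HasDerivAt (fun w : ℂ => Complex.exp (Complex.I * w)) (Complex.I * Complex.exp (Complex.I * θ)) (θ : ℂ) := by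
    simpa [mul_comm] using ((hasDerivAt_id (θ:ℂ)).const_mul Complex.I).cexp
  exact h.comp_ofReal

lemma zc_ne (θ : ℝ) : zc θ ≠ 0 := Complex.exp_ne_zero _

lemma norm_zc (θ : ℝ) : ‖zc θ‖ = 1 := by
  simp [zc, Complex.norm_exp]

lemma zc_two_pi : zc (2 * Real.pi) = 1 := by
  rw [zc]
  push_cast
  rw [show Complex.I * (2 * Real.pi) = 2 * Real.pi * Complex.I by ring,
    Complex.exp_two_pi_mul_I]

lemma zc_zero : zc 0 = 1 := by simp [zc]

lemma slit {w : ℂ} (hw : ‖w‖ < 1) : (1 - w) ∈ Complex.slitPlane := by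
  left
  have h1 : w.re ≤ ‖w‖ := by simpa using Complex.re_le_norm w
  simp only [Complex.sub_re, Complex.one_re]
  linarith

lemma one_sub_ne {w : ℂ} (hw : ‖w‖ < 1) : 1 - w ≠ 0 :=
  Complex.slitPlane_ne_zero (slit hw)

lemma cont_zc : Continuous zc :=
  Complex.continuous_exp.comp (continuous_const.mul Complex.continuous_ofReal)

lemma norm_c_zc {c : ℂ} (hc : ‖c‖ < 1) (θ : ℝ) : ‖c * zc θ‖ < 1 := by
  rw [norm_mul, norm_zc, mul_one]; exact hc

lemma norm_b_inv_zc {b : ℂ} (hb : ‖b‖ < 1) (θ : ℝ) : ‖b * (zc θ)⁻¹‖ < 1 := by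
  rw [norm_mul, norm_inv, norm_zc]; simpa using hb

lemma zc_sub_ne {b : ℂ} (hb : ‖b‖ < 1) (θ : ℝ) : zc θ - b ≠ 0 := by
  intro h
  have : ‖b‖ = 1 := by
    rw [← norm_zc θ, sub_eq_zero.mp h]
  linarith

-- I1 : ∫ z²/(1-cz) = 0
lemma I1 {c : ℂ} (hc : ‖c‖ < 1) :
    ∫ θ in (0:ℝ)..(2*Real.pi), (zc θ)^2 / (1 - c * zc θ) = 0 := by
  rcases eq_or_ne c 0 with rfl | hc0
  · have : ∀ θ : ℝ, HasDerivAt (fun θ : ℝ => zc θ ^ 2 / (2 * Complex.I)) ((zc θ)^2 / (1 - 0 * zc θ)) θ := by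
      intro θ
      have := ((hz θ).mul (hz θ)).div_const (2 * Complex.I)
      convert this using 1
      · rfl
      · ext x; rw [pow_two]; rfl
      · field_simp
        ring
    rw [integral_eq_sub_of_hasDerivAt (fun θ _ => this θ) ?_]
    · simp [zc_two_pi, zc_zero]
    · apply Continuous.intervalIntegrable
      exact (cont_zc.pow 2).div (continuous_const.sub (continuous_const.mul cont_zc))
        (fun θ => one_sub_ne (norm_c_zc (by norm_num : ‖(0:ℂ)‖ < 1) θ))
  · set F : ℝ → ℂ := fun θ => Complex.I * zc θ / c + (Complex.I / c^2) * Complex.log (1 - c * zc θ) with hF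
    have hder : ∀ θ : ℝ, HasDerivAt F ((zc θ)^2 / (1 - c * zc θ)) θ := by
      intro θ
      have h1 : HasDerivAt (fun θ : ℝ => Complex.I * zc θ / c) (Complex.I * (Complex.I * zc θ) / c) θ :=
        ((hz θ).const_mul Complex.I).div_const c
      have hu : HasDerivAt (fun θ : ℝ => 1 - c * zc θ) (-(c * (Complex.I * zc θ))) θ :=
        (((hz θ).const_mul c).const_sub 1)
      have h2 : HasDerivAt (fun θ : ℝ => (Complex.I / c^2) * Complex.log (1 - c * zc θ))
          ((Complex.I / c^2) * ((-(c * (Complex.I * zc θ))) / (1 - c * zc θ))) θ :=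
        (hu.clog_real (slit (norm_c_zc hc θ))).const_mul _
      have := h1.add h2
      have hne := one_sub_ne (norm_c_zc hc θ)
      refine this.congr_deriv (Eq.symm ?_)
      have hne' : 1 - zc θ * c ≠ 0 := by rwa [mul_comm]
      field_simp
      linear_combination (zc θ ^ 2 * c) * Complex.I_sq
    rw [integral_eq_sub_of_hasDerivAt (fun θ _ => hder θ) ?_]
    · simp [F, zc_two_pi, zc_zero]
    · apply Continuous.intervalIntegrable
      exact (cont_zc.pow 2).div (continuous_const.sub (continuous_const.mul cont_zc))
        (fun θ => one_sub_ne (norm_c_zc hc θ))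

-- helper primitives with derivative free of I
lemma hzI (θ : ℝ) : HasDerivAt (fun θ => Complex.I * zc θ) (-(zc θ)) θ := by
  have := (hz θ).const_mul Complex.I
  convert this using 1
  · rfl
  rw [← mul_assoc, Complex.I_mul_I]; ring

lemma hu_c (c : ℂ) (θ : ℝ) :
    HasDerivAt (fun θ : ℝ => 1 - c * zc θ) (-(c * (Complex.I * zc θ))) θ :=
  ((hz θ).const_mul c).const_sub 1

lemma hlogc {c : ℂ} (hc : ‖c‖ < 1) (θ : ℝ) :
    HasDerivAt (fun θ => Complex.I * Complex.log (1 - c * zc θ))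
      (c * zc θ / (1 - c * zc θ)) θ := by
  have := ((hu_c c θ).clog_real (slit (norm_c_zc hc θ))).const_mul Complex.I
  convert this using 1
  · rfl
  have hne := one_sub_ne (norm_c_zc hc θ)
  field_simp
  ring_nf
  simp [Complex.I_sq]

lemma hinvc {c : ℂ} (hc : ‖c‖ < 1) (θ : ℝ) :
    HasDerivAt (fun θ => Complex.I * (1 / (1 - c * zc θ)))
      (-(c * zc θ) / (1 - c * zc θ)^2) θ := by
  have hne := one_sub_ne (norm_c_zc hc θ)
  have := ((hasDerivAt_const θ (1:ℂ)).div (hu_c c θ) hne).const_mul Complex.I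
  refine this.congr_deriv (Eq.symm ?_)
  field_simp
  ring_nf
  simp [Complex.I_sq]

lemma hinv_zc (θ : ℝ) : HasDerivAt (fun θ => 1 / zc θ) (-(Complex.I / zc θ)) θ := by
  have := (hasDerivAt_const θ (1:ℂ)).div (hz θ) (zc_ne θ)
  refine this.congr_deriv (Eq.symm ?_)
  have := zc_ne θ
  field_simp
  ring

lemma hu_b (b : ℂ) (θ : ℝ) :
    HasDerivAt (fun θ : ℝ => 1 - b * (1 / zc θ)) (-(b * (-(Complex.I / zc θ)))) θ :=
  ((hinv_zc θ).const_mul b).const_sub 1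

lemma one_sub_div_ne {b : ℂ} (hb : ‖b‖ < 1) (θ : ℝ) : 1 - b * (1 / zc θ) ≠ 0 := by
  have := one_sub_ne (norm_b_inv_zc hb θ)
  simpa [div_eq_mul_inv, mul_comm] using this

lemma slit_b {b : ℂ} (hb : ‖b‖ < 1) (θ : ℝ) : 1 - b * (1 / zc θ) ∈ Complex.slitPlane := by
  have := slit (norm_b_inv_zc hb θ)
  simpa [div_eq_mul_inv, mul_comm] using this

lemma hlogb {b : ℂ} (hb : ‖b‖ < 1) (θ : ℝ) :
    HasDerivAt (fun θ => Complex.I * Complex.log (1 - b * (1 / zc θ)))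
      (-(b / (zc θ - b))) θ := by
  have := ((hu_b b θ).clog_real (slit_b hb θ)).const_mul Complex.I
  convert this using 1
  · rfl
  have hne := one_sub_div_ne hb θ
  have hne2 := zc_sub_ne hb θ
  have hz0 := zc_ne θ
  field_simp
  ring_nf
  simp [Complex.I_sq]

lemma hinvb {b : ℂ} (hb : ‖b‖ < 1) (θ : ℝ) :
    HasDerivAt (fun θ => Complex.I * (1 / (zc θ - b)))
      (zc θ / (zc θ - b)^2) θ := by
  have hu : HasDerivAt (fun θ : ℝ => zc θ - b) (Complex.I * zc θ) θ :=
    (hz θ).sub_const b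
  have := ((hasDerivAt_const θ (1:ℂ)).div hu (zc_sub_ne hb θ)).const_mul Complex.I
  refine this.congr_deriv (Eq.symm ?_)
  have hne := zc_sub_ne hb θ
  field_simp
  ring_nf
  simp [Complex.I_sq]

lemma hofReal (θ : ℝ) : HasDerivAt (fun θ : ℝ => (θ : ℂ)) 1 θ := by
  exact (hasDerivAt_id θ).ofReal_comp

lemma cont1 {c : ℂ} (hc : ‖c‖ < 1) : Continuous fun θ => zc θ ^ 2 / (1 - c * zc θ) :=
  (cont_zc.pow 2).div (continuous_const.sub (continuous_const.mul cont_zc))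
    (fun θ => one_sub_ne (norm_c_zc hc θ))

lemma cont2 {c : ℂ} (hc : ‖c‖ < 1) : Continuous fun θ => zc θ ^ 2 / (1 - c * zc θ) ^ 2 :=
  (cont_zc.pow 2).div ((continuous_const.sub (continuous_const.mul cont_zc)).pow 2)
    (fun θ => pow_ne_zero 2 (one_sub_ne (norm_c_zc hc θ)))

lemma cont3 {b : ℂ} (hb : ‖b‖ < 1) : Continuous fun θ => zc θ ^ 2 / (zc θ - b) :=
  (cont_zc.pow 2).div (cont_zc.sub continuous_const) (fun θ => zc_sub_ne hb θ)

lemma cont4 {b : ℂ} (hb : ‖b‖ < 1) : Continuous fun θ => zc θ ^ 2 / (zc θ - b) ^ 2 :=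
  (cont_zc.pow 2).div ((cont_zc.sub continuous_const).pow 2)
    (fun θ => pow_ne_zero 2 (zc_sub_ne hb θ))

lemma I2 {c : ℂ} (hc : ‖c‖ < 1) :
    ∫ θ in (0:ℝ)..(2*Real.pi), (zc θ)^2 / (1 - c * zc θ)^2 = 0 := by
  rcases eq_or_ne c 0 with rfl | hc0
  · have : ∀ θ : ℝ, HasDerivAt (fun θ : ℝ => zc θ ^ 2 / (2 * Complex.I))
        ((zc θ)^2 / (1 - 0 * zc θ)^2) θ := by
      intro θ
      have := ((hz θ).mul (hz θ)).div_const (2 * Complex.I)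
      convert this using 1
      · rfl
      · ext x; rw [pow_two]; rfl
      · field_simp
        ring
    rw [integral_eq_sub_of_hasDerivAt (fun θ _ => this θ) ((cont2 hc).intervalIntegrable _ _)]
    simp [zc_two_pi, zc_zero]
  · have hder : ∀ θ : ℝ, HasDerivAt (fun θ =>
        (-(1/c^2)) * (Complex.I * Complex.log (1 - c * zc θ)) +
        (-(1/c^2)) * (Complex.I * (1 / (1 - c * zc θ))))
        ((zc θ)^2 / (1 - c * zc θ)^2) θ := by
      intro θ
      have := ((hlogc hc θ).const_mul (-(1/c^2))).add ((hinvc hc θ).const_mul (-(1/c^2)))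
      refine this.congr_deriv (Eq.symm ?_)
      have hne := one_sub_ne (norm_c_zc hc θ)
      field_simp
      ring
    rw [integral_eq_sub_of_hasDerivAt (fun θ _ => hder θ) ((cont2 hc).intervalIntegrable _ _)]
    simp [zc_two_pi, zc_zero]

lemma I3 {b : ℂ} (hb : ‖b‖ < 1) :
    ∫ θ in (0:ℝ)..(2*Real.pi), (zc θ)^2 / (zc θ - b) = 2 * Real.pi * b := by
  rcases eq_or_ne b 0 with rfl | hb0
  · have : ∀ θ : ℝ, HasDerivAt (fun θ : ℝ => -(Complex.I * zc θ))
        ((zc θ)^2 / (zc θ - 0)) θ := by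
      intro θ
      have := (hzI θ).neg
      refine this.congr_deriv (Eq.symm ?_)
      have := zc_ne θ
      field_simp
      ring
    rw [integral_eq_sub_of_hasDerivAt (fun θ _ => this θ) ((cont3 hb).intervalIntegrable _ _)]
    simp [zc_two_pi, zc_zero]
  · have hder : ∀ θ : ℝ, HasDerivAt (fun θ : ℝ =>
        -(Complex.I * zc θ) + b * θ + (-b) * (Complex.I * Complex.log (1 - b * (1 / zc θ))))
        ((zc θ)^2 / (zc θ - b)) θ := by
      intro θ
      have := ((hzI θ).neg.add ((hofReal θ).const_mul b)).add ((hlogb hb θ).const_mul (-b))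
      refine this.congr_deriv (Eq.symm ?_)
      have hne := zc_sub_ne hb θ
      field_simp
      ring
    rw [integral_eq_sub_of_hasDerivAt (fun θ _ => hder θ) ((cont3 hb).intervalIntegrable _ _)]
    simp only [zc_two_pi, zc_zero]
    push_cast
    ring

lemma I4 {b : ℂ} (hb : ‖b‖ < 1) :
    ∫ θ in (0:ℝ)..(2*Real.pi), (zc θ)^2 / (zc θ - b)^2 = 2 * Real.pi := by
  rcases eq_or_ne b 0 with rfl | hb0
  · have : ∀ θ : ℝ, HasDerivAt (fun θ : ℝ => (θ : ℂ))
        ((zc θ)^2 / (zc θ - 0)^2) θ := by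
      intro θ
      have := hofReal θ
      convert this using 1
      have := zc_ne θ
      field_simp
      ring
    rw [integral_eq_sub_of_hasDerivAt (fun θ _ => this θ) ((cont4 hb).intervalIntegrable _ _)]
    push_cast
    ring
  · have hder : ∀ θ : ℝ, HasDerivAt (fun θ : ℝ =>
        (θ : ℂ) + (-1) * (Complex.I * Complex.log (1 - b * (1 / zc θ))) +
        b * (Complex.I * (1 / (zc θ - b))))
        ((zc θ)^2 / (zc θ - b)^2) θ := by
      intro θ
      have := (((hofReal θ).add ((hlogb hb θ).const_mul (-1))).add ((hinvb hb θ).const_mul b))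
      refine this.congr_deriv (Eq.symm ?_)
      have hne := zc_sub_ne hb θ
      field_simp
      ring
    rw [integral_eq_sub_of_hasDerivAt (fun θ _ => hder θ) ((cont4 hb).intervalIntegrable _ _)]
    simp only [zc_two_pi, zc_zero]
    push_cast
    ring
lemma norm_bc {b c : ℂ} (hb : ‖b‖ < 1) (hc : ‖c‖ < 1) : ‖b * c‖ < 1 := by
  rw [norm_mul]
  nlinarith [norm_nonneg b, norm_nonneg c]


lemma key_id (z b c u v d : ℂ) (hu : u ≠ 0) (hv : v ≠ 0) (hd : d ≠ 0)
    (eu : u = 1 - c*z) (ev : v = z - b) (ed : d = 1 - b*c) :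
    z^2/(u^2*v^2) = c^2/d^2*(z^2/u^2) + 2*c^2/d^3*(z^2/u) + 2*c/d^3*(z^2/v)
      + 1/d^2*(z^2/v^2) := by
  have poly : c^2*d*z^2*v^2 + 2*c^2*z^2*u*v^2 + 2*c*z^2*u^2*v + d*z^2*u^2 = z^2*d^3 := by
    subst eu ev ed; ring
  have e0 : z^2/(u^2*v^2) = (z^2*d^3)/(d^3*(u^2*v^2)) := by
    field_simp
    
  have e2 : c^2/d^2*(z^2/u^2) = (c^2*d*z^2*v^2)/(d^3*(u^2*v^2)) := by
    field_simp
  have e1 : 2*c^2/d^3*(z^2/u) = (2*c^2*z^2*u*v^2)/(d^3*(u^2*v^2)) := by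
    field_simp
  have e3 : 2*c/d^3*(z^2/v) = (2*c*z^2*u^2*v)/(d^3*(u^2*v^2)) := by
    field_simp
  have e4 : 1/d^2*(z^2/v^2) = (d*z^2*u^2)/(d^3*(u^2*v^2)) := by
    field_simp
  rw [e0, e2, e1, e3, e4, ← add_div, ← add_div, ← add_div]
  rw [← poly]

set_option maxHeartbeats 2000000 in
lemma Jint {b c : ℂ} (hb : ‖b‖ < 1) (hc : ‖c‖ < 1) :
    ∫ θ in (0:ℝ)..(2*Real.pi), (zc θ)^2 / ((1 - c * zc θ)^2 * (zc θ - b)^2)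
      = 2 * Real.pi * (1 + b * c) / (1 - b * c)^3 := by
  have hbc : (1 : ℂ) - b * c ≠ 0 := one_sub_ne (norm_bc hb hc)
  have key : ∀ θ : ℝ, (zc θ)^2 / ((1 - c * zc θ)^2 * (zc θ - b)^2)
      = c^2/(1-b*c)^2 * ((zc θ)^2 / (1 - c * zc θ)^2)
      + 2*c^2/(1-b*c)^3 * ((zc θ)^2 / (1 - c * zc θ))
      + 2*c/(1-b*c)^3 * ((zc θ)^2 / (zc θ - b))
      + 1/(1-b*c)^2 * ((zc θ)^2 / (zc θ - b)^2) :=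
    fun θ => key_id (zc θ) b c _ _ _ (one_sub_ne (norm_c_zc hc θ)) (zc_sub_ne hb θ) hbc
      rfl rfl rfl
  rw [intervalIntegral.integral_congr (fun θ _ => key θ)]
  have i2 := ((cont2 hc).intervalIntegrable (μ := MeasureTheory.volume) (0:ℝ) (2*Real.pi)).const_mul (c^2/(1-b*c)^2)
  have i1 := ((cont1 hc).intervalIntegrable (μ := MeasureTheory.volume) (0:ℝ) (2*Real.pi)).const_mul (2*c^2/(1-b*c)^3)
  have i3 := ((cont3 hb).intervalIntegrable (μ := MeasureTheory.volume) (0:ℝ) (2*Real.pi)).const_mul (2*c/(1-b*c)^3)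
  have i4 := ((cont4 hb).intervalIntegrable (μ := MeasureTheory.volume) (0:ℝ) (2*Real.pi)).const_mul (1/(1-b*c)^2)
  rw [intervalIntegral.integral_add (i2.add i1 |>.add i3) i4,
      intervalIntegral.integral_add (i2.add i1) i3,
      intervalIntegral.integral_add i2 i1,
      intervalIntegral.integral_const_mul, intervalIntegral.integral_const_mul,
      intervalIntegral.integral_const_mul, intervalIntegral.integral_const_mul,
      I1 hc, I2 hc, I3 hb, I4 hb]
  field_simp
  ring

lemma conj_zc (θ : ℝ) : (starRingEnd ℂ) (zc θ) = (zc θ)⁻¹ := by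
  rw [zc, ← Complex.exp_conj, ← Complex.exp_neg]
  congr 1
  simp [Complex.conj_ofReal]

lemma mul_conj_norm (u : ℂ) : u * (starRingEnd ℂ) u = ((‖u‖^2 : ℝ) : ℂ) := by
  rw [Complex.mul_conj]
  norm_cast
  rw [Complex.normSq_eq_norm_sq]

set_option maxHeartbeats 2000000 in
lemma tau_int (a : ℂ) (ha : ‖a‖ < 1) (r : ℝ) (hr0 : 0 ≤ r) (hr1 : r ≤ 1) :
    ∫ θ in (0:ℝ)..(2*Real.pi),
        r * (1 - ‖a‖ ^ 2) ^ 2 / ‖1 - (r * Complex.exp (Complex.I * θ)) * conj a‖ ^ 4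
      = 2 * Real.pi * (r * (1 - ‖a‖^2)^2 * (1 + r^2 * ‖a‖^2) / (1 - r^2 * ‖a‖^2)^3) := by
  have hra : r * ‖a‖ < 1 := by nlinarith [norm_nonneg a]
  set b : ℂ := (r : ℂ) * a with hbdef
  set c : ℂ := (r : ℂ) * conj a with hcdef
  have hb : ‖b‖ < 1 := by
    rw [hbdef, norm_mul, Complex.norm_real, Real.norm_of_nonneg hr0]; exact hra
  have hc : ‖c‖ < 1 := by
    rw [hcdef, norm_mul, Complex.norm_real, Real.norm_of_nonneg hr0,
      Complex.norm_conj]; exact hra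
  have hbc_ne : (1 : ℂ) - b * c ≠ 0 := one_sub_ne (norm_bc hb hc)
  -- pointwise identity of complex integrands
  have point : ∀ θ : ℝ,
      ((r * (1 - ‖a‖ ^ 2) ^ 2 / ‖1 - (r * Complex.exp (Complex.I * θ)) * conj a‖ ^ 4 : ℝ) : ℂ)
      = ((r * (1 - ‖a‖^2)^2 : ℝ) : ℂ) * ((zc θ)^2 / ((1 - c * zc θ)^2 * (zc θ - b)^2)) := by
    intro θ
    have hzne := zc_ne θ
    have hu : (1 : ℂ) - c * zc θ ≠ 0 := one_sub_ne (norm_c_zc hc θ)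
    have hv : zc θ - b ≠ 0 := zc_sub_ne hb θ
    have hnorm : ((‖1 - (r * Complex.exp (Complex.I * θ)) * conj a‖ ^ 4 : ℝ) : ℂ)
        = (1 - c * zc θ)^2 * (zc θ - b)^2 / (zc θ)^2 := by
      have h4 : (‖1 - (r * Complex.exp (Complex.I * θ)) * conj a‖ ^ 4 : ℝ)
          = (‖1 - c * zc θ‖ ^ 2) ^ 2 := by
        rw [show (1 : ℂ) - (r * Complex.exp (Complex.I * θ)) * conj a = 1 - c * zc θ by
          rw [hcdef, zc]; ring]
        ring
      rw [h4, Complex.ofReal_pow, ← mul_conj_norm]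
      have hconj : (starRingEnd ℂ) (1 - c * zc θ) = (zc θ - b) / zc θ := by
        rw [map_sub, map_mul, conj_zc, map_one, hcdef, hbdef]
        simp only [map_mul, Complex.conj_ofReal, Complex.conj_conj]
        field_simp
      rw [hconj]
      field_simp
      
    rw [Complex.ofReal_div, hnorm, div_div_eq_mul_div, mul_div_assoc]
  -- now compute
  have hbc : b * c = ((r^2 * ‖a‖^2 : ℝ) : ℂ) := by
    rw [hbdef, hcdef]
    push_cast
    rw [show (r:ℂ) * a * ((r:ℂ) * conj a) = (r:ℂ)^2 * (a * conj a) by ring, Complex.mul_conj]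
    rw [Complex.normSq_eq_norm_sq]
    push_cast
    rfl
  apply Complex.ofReal_injective
  rw [← intervalIntegral.integral_ofReal, intervalIntegral.integral_congr (fun θ _ => point θ),
    intervalIntegral.integral_const_mul, Jint hb hc, hbc]
  have h1 : (r*‖a‖)^2 < 1 := by nlinarith [mul_nonneg hr0 (norm_nonneg a)]
  have hden : (1 : ℝ) - r^2 * ‖a‖^2 ≠ 0 := by nlinarith
  push_cast
  field_simp
  

lemma r_int (a : ℂ) (ha : ‖a‖ < 1) (t : ℝ) (ht : t ∈ Set.Icc (0:ℝ) 1) :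
    ∫ r in t..1, 2 * Real.pi * (r * (1 - ‖a‖^2)^2 * (1 + r^2 * ‖a‖^2) / (1 - r^2 * ‖a‖^2)^3)
      = Real.pi * (1 - t ^ 2) * (1 - ‖a‖ ^ 4 * t ^ 2) / (1 - ‖a‖ ^ 2 * t ^ 2) ^ 2 := by
  obtain ⟨ht0, ht1⟩ := ht
  set s : ℝ := ‖a‖^2 with hsdef
  have hs0 : 0 ≤ s := sq_nonneg _
  have hs1 : s < 1 := by nlinarith [norm_nonneg a]
  have hden : ∀ r : ℝ, r ∈ Set.uIcc t 1 → 1 - s * r^2 ≠ 0 := by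
    intro r hr
    rw [Set.uIcc_of_le ht1] at hr
    obtain ⟨hr1, hr2⟩ := hr
    have hr0 : 0 ≤ r := le_trans ht0 hr1
    have hr2' : r^2 ≤ 1 := by nlinarith
    nlinarith [mul_le_of_le_one_right hs0 hr2']
  have hderiv : ∀ r ∈ Set.uIcc t 1, HasDerivAt
      (fun r : ℝ => Real.pi * (1-s)^2 * r^2 / (1 - s * r^2)^2)
      (2 * Real.pi * (r * (1 - s)^2 * (1 + r^2 * s) / (1 - r^2 * s)^3)) r := by
    intro r hr
    have hdr := hden r hr
    have hw : HasDerivAt (fun r : ℝ => 1 - s * r^2) (-(s * (2 * r))) r := by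
      simpa using ((hasDerivAt_pow 2 r).const_mul s).const_sub 1
    have hnum : HasDerivAt (fun r : ℝ => Real.pi * (1-s)^2 * r^2)
        (Real.pi * (1-s)^2 * (2 * r)) r := by
      simpa using (hasDerivAt_pow 2 r).const_mul (Real.pi * (1-s)^2)
    have hd2 : HasDerivAt (fun r : ℝ => (1 - s * r^2)^2)
        (2 * (1 - s * r^2) * (-(s * (2 * r)))) r := by
      have := hw.pow 2; simp at this; exact this.congr_deriv (by ring)
    have := hnum.div hd2 (pow_ne_zero 2 hdr)
    refine this.congr_deriv (Eq.symm ?_)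
    rw [show (1:ℝ) - r^2*s = 1 - s*r^2 by ring]
    field_simp
    ring
  have hcont : IntervalIntegrable
      (fun r : ℝ => 2 * Real.pi * (r * (1 - s)^2 * (1 + r^2 * s) / (1 - r^2 * s)^3))
      MeasureTheory.volume t 1 := by
    apply ContinuousOn.intervalIntegrable
    have hc2 : ContinuousOn (fun r : ℝ => r*(1-s)^2*(1+r^2*s) / (1-r^2*s)^3) (Set.uIcc t 1) := by
      apply ContinuousOn.div (by fun_prop) (by fun_prop)
      intro r hr
      apply pow_ne_zero 3
      have := hden r hr
      rw [show (1:ℝ)-r^2*s = 1-s*r^2 by ring]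
      exact this
    exact continuousOn_const.mul hc2
  rw [integral_eq_sub_of_hasDerivAt hderiv hcont]
  have h1 : (1:ℝ) - s ≠ 0 := by linarith
  have ht' : (1:ℝ) - s * t^2 ≠ 0 := hden t (Set.left_mem_uIcc)
  have h4 : ‖a‖^4 = s^2 := by rw [hsdef]; ring
  rw [h4]
  field_simp
  ring

theorem polar_integral_formula (a : ℂ) (ha : ‖a‖ < 1) (t : ℝ) (ht : t ∈ Set.Icc (0:ℝ) 1) :
    (∫ τ in (0:ℝ)..(2 * Real.pi), ∫ r in t..1,
        r * (1 - ‖a‖ ^ 2) ^ 2 / ‖1 - (r * Complex.exp (Complex.I * τ)) * conj a‖ ^ 4) =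
      Real.pi * (1 - t ^ 2) * (1 - ‖a‖ ^ 4 * t ^ 2) / (1 - ‖a‖ ^ 2 * t ^ 2) ^ 2 := by
  obtain ⟨ht0, ht1⟩ := ht
  set f : ℝ → ℝ → ℝ := fun τ r =>
    r * (1 - ‖a‖ ^ 2) ^ 2 / ‖1 - (r * Complex.exp (Complex.I * τ)) * conj a‖ ^ 4 with hf
  have h2pi : (0:ℝ) ≤ 2 * Real.pi := by positivity
  -- continuity of the uncurried integrand on a compact rectangle
  have hne : ∀ p : ℝ × ℝ, p ∈ (Set.Icc (0:ℝ) (2*Real.pi)) ×ˢ (Set.Icc t 1) →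
      ‖1 - ((p.2 : ℂ) * Complex.exp (Complex.I * p.1)) * conj a‖ ^ 4 ≠ 0 := by
    rintro ⟨τ, r⟩ ⟨-, hr⟩
    have hr0 : (0:ℝ) ≤ r := le_trans ht0 hr.1
    have hw : ‖((r : ℂ) * Complex.exp (Complex.I * τ)) * conj a‖ < 1 := by
      rw [norm_mul, norm_mul, Complex.norm_real, Real.norm_of_nonneg hr0]
      have : ‖Complex.exp (Complex.I * (τ:ℝ))‖ = 1 := norm_zc τ
      rw [this, mul_one, Complex.norm_conj]
      nlinarith [norm_nonneg a, hr.2]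
    exact pow_ne_zero 4 (norm_ne_zero_iff.mpr (one_sub_ne hw))
  have hcontOn : ContinuousOn (Function.uncurry f)
      ((Set.Icc (0:ℝ) (2*Real.pi)) ×ˢ (Set.Icc t 1)) := by
    apply ContinuousOn.div
    · fun_prop
    · fun_prop
    · exact hne
  have hInt : MeasureTheory.IntegrableOn (Function.uncurry f)
      ((Set.Ioc (0:ℝ) (2*Real.pi)) ×ˢ (Set.Ioc t 1))
      (MeasureTheory.volume.prod MeasureTheory.volume) :=
    (hcontOn.integrableOn_compact (isCompact_Icc.prod isCompact_Icc)).mono_set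
      (Set.prod_mono Set.Ioc_subset_Icc_self Set.Ioc_subset_Icc_self)
  have swap :
      (∫ τ in Set.Ioc (0:ℝ) (2*Real.pi), ∫ r in Set.Ioc t 1, f τ r)
        = ∫ r in Set.Ioc t 1, ∫ τ in Set.Ioc (0:ℝ) (2*Real.pi), f τ r := by
    apply MeasureTheory.integral_integral_swap
    rwa [MeasureTheory.Measure.prod_restrict]
  calc (∫ τ in (0:ℝ)..(2 * Real.pi), ∫ r in t..1, f τ r)
      = ∫ τ in Set.Ioc (0:ℝ) (2*Real.pi), ∫ r in Set.Ioc t 1, f τ r := by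
        rw [intervalIntegral.integral_of_le h2pi]
        apply MeasureTheory.setIntegral_congr_fun measurableSet_Ioc
        intro τ _
        exact intervalIntegral.integral_of_le ht1
    _ = ∫ r in Set.Ioc t 1, ∫ τ in Set.Ioc (0:ℝ) (2*Real.pi), f τ r := swap
    _ = ∫ r in t..1, ∫ τ in (0:ℝ)..(2*Real.pi), f τ r := by
        rw [intervalIntegral.integral_of_le ht1]
        apply MeasureTheory.setIntegral_congr_fun measurableSet_Ioc
        intro r _
        exact (intervalIntegral.integral_of_le h2pi).symm
    _ = ∫ r in t..1, 2 * Real.pi * (r * (1 - ‖a‖^2)^2 * (1 + r^2 * ‖a‖^2) / (1 - r^2 * ‖a‖^2)^3) := by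
        apply intervalIntegral.integral_congr
        intro r hr
        rw [Set.uIcc_of_le ht1] at hr
        exact tau_int a ha r (le_trans ht0 hr.1) hr.2
    _ = Real.pi * (1 - t ^ 2) * (1 - ‖a‖ ^ 4 * t ^ 2) / (1 - ‖a‖ ^ 2 * t ^ 2) ^ 2 :=
        r_int a ha t ⟨ht0, ht1⟩
end

section
/- Let μ : [0,1] → [0,π] be a continuous function with μ(1)=0, differentiable almost everywhere, satisfying the differential inequality 2(π−μ(t)) ≤ −t·μ'(t)·c for almost every t ∈ (0,1), where c > 0, and assume μ is nonincreasing. Then μ(t) ≥ π(1−t^{2/c}) for all t ∈ (0,1]. -/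
open MeasureTheory

theorem distribution_ode_estimate (μ μ' : ℝ → ℝ) (c : ℝ) (hc : 0 < c)
    (hcont : ContinuousOn μ (Set.Icc 0 1))
    (hmap : ∀ t ∈ Set.Icc (0:ℝ) 1, μ t ∈ Set.Icc 0 Real.pi)
    (h1 : μ 1 = 0) (hmono : AntitoneOn μ (Set.Icc 0 1))
    (hderiv : ∀ᵐ t ∂(volume.restrict (Set.Ioo (0:ℝ) 1)), HasDerivAt μ (μ' t) t)
    (hineq : ∀ᵐ t ∂(volume.restrict (Set.Ioo (0:ℝ) 1)),
      2 * (Real.pi - μ t) ≤ -t * μ' t * c) :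
    ∀ t ∈ Set.Ioc (0:ℝ) 1, Real.pi * (1 - t ^ (2 / c)) ≤ μ t := by
  intro t ht
  set r : ℝ := 2 / c with hr
  have hrpos : 0 < r := by positivity
  -- the clamp function
  set q : ℝ → ℝ := fun x => max 0 (min 1 x) with hq
  have hq_mem : ∀ x, q x ∈ Set.Icc (0:ℝ) 1 := by
    intro x
    refine ⟨le_max_left _ _, ?_⟩
    simp [hq]
  have hq_id : ∀ x ∈ Set.Icc (0:ℝ) 1, q x = x := by
    rintro x ⟨hx0, hx1⟩
    simp [hq, min_eq_right, hx1, max_eq_right, hx0]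
  have hq_mono : Monotone q := fun x y h =>
    max_le_max le_rfl (min_le_min le_rfl h)
  -- the monotone extension g = π - μ ∘ q
  set g : ℝ → ℝ := fun x => Real.pi - μ (q x) with hg
  have hgmono : Monotone g := by
    intro x y hxy
    have : μ (q y) ≤ μ (q x) := hmono (hq_mem x) (hq_mem y) (hq_mono hxy)
    simp only [hg]; linarith
  have hgcont : Continuous g := by
    have hqc : Continuous q := continuous_const.max (continuous_const.min continuous_id)
    exact continuous_const.sub (hcont.comp_continuous hqc hq_mem)
  have hg_nonneg : ∀ x, 0 ≤ g x := fun x => by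
    have := (hmap _ (hq_mem x)).2; simp only [hg]; linarith
  have hg_le_pi : ∀ x, g x ≤ Real.pi := fun x => by
    have := (hmap _ (hq_mem x)).1; simp only [hg]; linarith
  have hg_eq : ∀ x ∈ Set.Icc (0:ℝ) 1, g x = Real.pi - μ x := by
    intro x hx; simp only [hg, hq_id x hx]
  have hg1 : g 1 = Real.pi := by
    rw [hg_eq 1 (by norm_num), h1, sub_zero]
  -- the Stieltjes function
  set G : StieltjesFunction ℝ := ⟨g, hgmono, fun x => hgcont.continuousAt.continuousWithinAt⟩
    with hG
  have hGg : ∀ x, G x = g x := fun _ => rfl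
  set d : ℝ → ℝ := fun x => (Measure.rnDeriv G.measure volume x).toReal with hd
  have hGd : ∀ᵐ x, HasDerivAt G (d x) x := G.ae_hasDerivAt
  -- a.e. lower bound for the Radon-Nikodym derivative
  have key : ∀ᵐ s ∂(volume.restrict (Set.Ioo (0:ℝ) 1)),
      ENNReal.ofReal (r * g s / s) ≤ Measure.rnDeriv G.measure volume s := by
    filter_upwards [hderiv, hineq, ae_restrict_of_ae hGd,
      ae_restrict_of_ae (Measure.rnDeriv_lt_top G.measure volume),
      ae_restrict_mem measurableSet_Ioo] with s h1' h2' h3' h4' hs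
    have hs0 : 0 < s := hs.1
    -- G has derivative -μ' s at s
    have hEq : g =ᶠ[nhds s] fun x => Real.pi - μ x := by
      have hnb : Set.Ioo (0:ℝ) 1 ∈ nhds s := isOpen_Ioo.mem_nhds hs
      filter_upwards [hnb] with x hx
      exact hg_eq x ⟨hx.1.le, hx.2.le⟩
    have hG' : HasDerivAt g (-μ' s) s := by
      have : HasDerivAt (fun x => Real.pi - μ x) (0 - μ' s) s :=
        (hasDerivAt_const s Real.pi).sub h1'
      rw [zero_sub] at this
      exact this.congr_of_eventuallyEq hEq
    have hds : d s = -μ' s := by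
      have : HasDerivAt g (d s) s := h3'
      exact this.unique hG'
    -- the differential inequality in terms of d
    have hgs : g s = Real.pi - μ s := hg_eq s ⟨hs.1.le, hs.2.le⟩
    have hineq2 : r * g s / s ≤ d s := by
      rw [hds, hgs]
      rw [div_le_iff₀ hs0, hr, div_mul_eq_mul_div, div_le_iff₀ hc]
      nlinarith [h2']
    calc ENNReal.ofReal (r * g s / s) ≤ ENNReal.ofReal (d s) :=
          ENNReal.ofReal_le_ofReal hineq2
      _ = Measure.rnDeriv G.measure volume s := by
          rw [hd, ENNReal.ofReal_toReal h4'.ne]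
  -- the key step inequality
  have step : ∀ a b : ℝ, 0 < a → a ≤ b → b ≤ 1 →
      g a * (1 + r * (Real.log b - Real.log a)) ≤ g b := by
    intro a b ha hab hb1
    have hb0 : 0 < b := lt_of_lt_of_le ha hab
    have hlog : 0 ≤ Real.log b - Real.log a :=
      sub_nonneg.2 (Real.log_le_log ha hab)
    -- integrability of s ↦ g a * r / s on Ioc a b
    have hint : IntegrableOn (fun s : ℝ => g a * r / s) (Set.Ioc a b) volume := by
      have : IntegrableOn (fun s : ℝ => g a * r / s) (Set.Icc a b) volume := by
        apply ContinuousOn.integrableOn_Icc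
        apply ContinuousOn.div continuousOn_const continuousOn_id
        intro x hx
        exact ne_of_gt (lt_of_lt_of_le ha hx.1)
      exact this.mono_set Set.Ioc_subset_Icc_self
    -- the integral computation
    have hval : ∫ s in Set.Ioc a b, g a * r / s = g a * r * (Real.log b - Real.log a) := by
      rw [← intervalIntegral.integral_of_le hab]
      have h0 : (0:ℝ) ∉ Set.uIcc a b := by
        rw [Set.uIcc_of_le hab]
        intro h
        exact absurd h.1 (not_le.2 ha)
      calc ∫ s in a..b, g a * r / s = ∫ s in a..b, (g a * r) * s⁻¹ := by
            simp only [div_eq_mul_inv]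
        _ = (g a * r) * ∫ s in a..b, s⁻¹ := intervalIntegral.integral_const_mul _ _
        _ = (g a * r) * Real.log (b / a) := by rw [integral_inv h0]
        _ = g a * r * (Real.log b - Real.log a) := by
            rw [Real.log_div (ne_of_gt hb0) (ne_of_gt ha)]
    -- lower bound on the measure of Ioc a b
    have hm1 : ENNReal.ofReal (g a * r * (Real.log b - Real.log a))
        ≤ G.measure (Set.Ioc a b) := by
      have e1 : ENNReal.ofReal (g a * r * (Real.log b - Real.log a))
          = ∫⁻ s in Set.Ioc a b, ENNReal.ofReal (g a * r / s) ∂volume := by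
        rw [← hval]
        rw [MeasureTheory.ofReal_integral_eq_lintegral_ofReal hint]
        filter_upwards [ae_restrict_mem measurableSet_Ioc] with s hs
        have hs0 : 0 < s := lt_of_lt_of_le ha hs.1.le
        have := hg_nonneg a
        positivity
      rw [e1]
      have e2 : ∀ᵐ s ∂(volume.restrict (Set.Ioc a b)),
          ENNReal.ofReal (g a * r / s) ≤ Measure.rnDeriv G.measure volume s := by
        have hsub : Set.Ioo a b ⊆ Set.Ioo (0:ℝ) 1 := fun x hx =>
          ⟨lt_trans ha hx.1, lt_of_lt_of_le hx.2 hb1⟩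
        have k1 : ∀ᵐ s ∂(volume.restrict (Set.Ioo a b)),
            ENNReal.ofReal (r * g s / s) ≤ Measure.rnDeriv G.measure volume s :=
          ae_restrict_of_ae_restrict_of_subset hsub key
        rw [Measure.restrict_congr_set MeasureTheory.Ioo_ae_eq_Ioc] at k1
        filter_upwards [k1, ae_restrict_mem measurableSet_Ioc] with s hk hs
        refine le_trans (ENNReal.ofReal_le_ofReal ?_) hk
        have hs0 : 0 < s := lt_of_lt_of_le ha hs.1.le
        have hgas : g a ≤ g s := hgmono hs.1.le
        rw [div_le_div_iff₀ hs0 hs0]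
        nlinarith [mul_le_mul_of_nonneg_right
          (mul_le_mul_of_nonneg_right hgas hrpos.le) hs0.le]
      calc ∫⁻ s in Set.Ioc a b, ENNReal.ofReal (g a * r / s) ∂volume
          ≤ ∫⁻ s in Set.Ioc a b, Measure.rnDeriv G.measure volume s ∂volume :=
            lintegral_mono_ae e2
        _ ≤ G.measure (Set.Ioc a b) := Measure.setLIntegral_rnDeriv_le _
    rw [G.measure_Ioc] at hm1
    have hm2 : g a * r * (Real.log b - Real.log a) ≤ G b - G a := by
      rw [← ENNReal.ofReal_le_ofReal_iff]
      · exact hm1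
      · rw [hGg, hGg]; linarith [hgmono hab]
    rw [hGg, hGg] at hm2
    nlinarith [hg_nonneg a]
  -- the chain inequality
  obtain ⟨ht0, ht1⟩ := ht
  set L : ℝ := Real.log t with hL
  have hLnp : L ≤ 0 := Real.log_nonpos ht0.le ht1
  have chain : ∀ n : ℕ, 1 ≤ n → g t * (1 + r * (-L) / n) ^ n ≤ Real.pi := by
    intro n hn
    have hn0 : (0:ℝ) < n := by exact_mod_cast hn
    set σ : ℕ → ℝ := fun i => Real.exp (L * ((n:ℝ) - i) / n) with hσ
    have hσpos : ∀ i, 0 < σ i := fun i => Real.exp_pos _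
    have hσle1 : ∀ i : ℕ, i ≤ n → σ i ≤ 1 := by
      intro i hi
      rw [hσ]
      have : ((i:ℝ)) ≤ n := by exact_mod_cast hi
      have h1' : L * ((n:ℝ) - i) / n ≤ 0 := by
        apply div_nonpos_of_nonpos_of_nonneg _ hn0.le
        exact mul_nonpos_of_nonpos_of_nonneg hLnp (by linarith)
      calc Real.exp (L * ((n:ℝ) - i) / n) ≤ Real.exp 0 := Real.exp_le_exp.2 h1'
        _ = 1 := Real.exp_zero
    have hσ0 : σ 0 = t := by
      rw [hσ]
      simp only [Nat.cast_zero, sub_zero]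
      rw [mul_div_assoc, div_self (ne_of_gt hn0), mul_one, hL, Real.exp_log ht0]
    have hσn : σ n = 1 := by
      rw [hσ]; simp
    have hσmono : ∀ i : ℕ, i < n → σ i ≤ σ (i + 1) := by
      intro i hi
      rw [hσ]
      apply Real.exp_le_exp.2
      rw [div_le_div_iff₀ hn0 hn0]
      have hin : ((i:ℝ)) + 1 ≤ n := by exact_mod_cast hi
      push_cast
      nlinarith [mul_nonneg (neg_nonneg.2 hLnp) hn0.le]
    have hσlog : ∀ i : ℕ, Real.log (σ (i+1)) - Real.log (σ i) = -L / n := by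
      intro i
      rw [hσ]
      simp only [Real.log_exp]
      push_cast
      ring
    have main : ∀ i : ℕ, i ≤ n → g t * (1 + r * (-L) / n) ^ i ≤ g (σ i) := by
      intro i
      induction i with
      | zero => intro _; rw [hσ0]; simp
      | succ i ih =>
        intro hi
        have hi' : i < n := lt_of_lt_of_le (Nat.lt_succ_self i) hi
        have ihh := ih hi'.le
        have hstep := step (σ i) (σ (i+1)) (hσpos i) (hσmono i hi') (hσle1 (i+1) hi)
        rw [hσlog i] at hstep
        have hfac : (0:ℝ) ≤ 1 + r * (-L) / n := by
          have h0L : (0:ℝ) ≤ -L := neg_nonneg.2 hLnp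
          have : 0 ≤ r * (-L) / n := by positivity
          linarith
        have h2 : g t * (1 + r * (-L) / n) ^ i * (1 + r * (-L) / n)
            ≤ g (σ i) * (1 + r * (-L) / n) := by
          apply mul_le_mul_of_nonneg_right ihh hfac
        calc g t * (1 + r * (-L) / n) ^ (i+1)
            = g t * (1 + r * (-L) / n) ^ i * (1 + r * (-L) / n) := by ring
          _ ≤ g (σ i) * (1 + r * (-L) / n) := h2
          _ = g (σ i) * (1 + r * (-L / n)) := by ring_nf
          _ ≤ g (σ (i+1)) := by
              have := hstep
              nlinarith [this]
    have := main n le_rfl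
    rw [hσn, hg1] at this
    exact this
  -- pass to the limit
  have hT : Filter.Tendsto (fun n : ℕ => g t * (1 + r * (-L) / n) ^ n)
      Filter.atTop (nhds (g t * Real.exp (r * (-L)))) :=
    (Real.tendsto_one_add_div_pow_exp (r * (-L))).const_mul (g t)
  have hlim : g t * Real.exp (r * (-L)) ≤ Real.pi := by
    apply le_of_tendsto hT
    filter_upwards [Filter.eventually_ge_atTop 1] with n hn
    exact chain n hn
  have htr : t ^ r = Real.exp (r * L) := by
    rw [Real.rpow_def_of_pos ht0, hL, mul_comm]
  have hfinal : g t ≤ Real.pi * t ^ r := by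
    rw [htr]
    have hexp : Real.exp (r * (-L)) * Real.exp (r * L) = 1 := by
      rw [← Real.exp_add]; ring_nf; exact Real.exp_zero
    have h2 := mul_le_mul_of_nonneg_right hlim (Real.exp_pos (r * L)).le
    rw [mul_assoc, hexp, mul_one] at h2
    exact h2
  have hgt : g t = Real.pi - μ t := hg_eq t ⟨ht0.le, ht1⟩
  rw [hgt] at hfinal
  rw [hr] at hfinal
  rw [mul_sub, mul_one]
  linarith [hfinal]
end

section
/- For the degree-1 Blaschke product and p = 2: h(a) := ‖(z+a)/(1+z·conj(a))‖_{L²(𝔻)} satisfies h(a)² = π·(2|a|⁴−|a|²−(1−|a|²)²·log(1−|a|²))/|a|⁴ for 0<|a|<1, and h attains its minimum √(π/2) exactly at a = 0. -/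
open MeasureTheory Complex ComplexConjugate Set Real

theorem circle_int (w : ℂ) (hw : ‖w‖ < 1) :
    ∫ θ in Set.Ioo (-π) π, ((Complex.normSq (1 + w * Complex.exp (θ * Complex.I)))⁻¹ : ℝ)
      = 2 * π / (1 - Complex.normSq w) := by
  have hne : ∀ z : ℂ, ‖z‖ ≤ 1 → 1 + w * z ≠ 0 := by
    intro z hz h
    have h1 : ‖w * z‖ < 1 := by
      rw [norm_mul]
      calc ‖w‖ * ‖z‖ ≤ ‖w‖ * 1 := by nlinarith [norm_nonneg w, norm_nonneg z]
        _ < 1 := by simpa using hw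
    have h2 : (1 : ℝ) ≤ ‖w * z‖ := by
      have : w * z = -1 := by linear_combination h
      simp [this]
    linarith
  set f : ℝ → ℝ := fun θ => (Complex.normSq (1 + w * Complex.exp (θ * Complex.I)))⁻¹ with hfdef
  have hper : Function.Periodic f (2 * π) := by
    intro θ
    have : Complex.exp ((↑(θ + 2 * π)) * Complex.I) = Complex.exp (θ * Complex.I) := by
      push_cast
      rw [add_mul, Complex.exp_add, Complex.exp_two_pi_mul_I, mul_one]
    simp only [f, this]
  have h1 : ∫ θ in Set.Ioo (-π) π, f θ = ∫ θ in (-π)..π, f θ := by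
    rw [intervalIntegral.integral_of_le (by linarith [Real.pi_pos])]
    exact setIntegral_congr_set Ioo_ae_eq_Ioc
  have h2 : ∫ θ in (-π)..π, f θ = ∫ θ in (0:ℝ)..2*π, f θ := by
    have h := hper.intervalIntegral_add_eq (-π) 0
    rw [show -π + 2*π = π by ring, zero_add] at h
    exact h
  -- Cauchy
  set g : ℂ → ℂ := fun z => -Complex.I * (1 + w * z)⁻¹ with hgdef
  have hg : DiffContOnCl ℂ g (Metric.ball 0 1) := by
    apply DifferentiableOn.diffContOnCl
    intro z hz
    rw [closure_ball (0:ℂ) one_ne_zero, Metric.mem_closedBall, dist_zero_right] at hz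
    exact ((differentiableAt_const _).mul
      (((differentiableAt_const _).add
        ((differentiableAt_const w).mul differentiableAt_id)).inv (hne z hz))).differentiableWithinAt
  have hw0 : -(conj w) ∈ Metric.ball (0:ℂ) 1 := by
    simpa [Metric.mem_ball, dist_zero_right] using hw
  have cauchy := hg.circleIntegral_sub_inv_smul hw0
  have hns : Complex.normSq w < 1 := by
    rw [← Complex.sq_norm]
    nlinarith [norm_nonneg w]
  have hden : (1:ℝ) - Complex.normSq w ≠ 0 := sub_ne_zero.mpr (ne_of_lt hns).symm
  have hval : ((2 * π * Complex.I : ℂ)) • g (-(conj w)) = ((2 * π / (1 - Complex.normSq w) : ℝ) : ℂ) := by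
    simp only [g, smul_eq_mul]
    have : (1 : ℂ) + w * -(conj w) = ((1 - Complex.normSq w : ℝ) : ℂ) := by
      push_cast
      rw [← Complex.mul_conj]
      ring
    rw [this]
    push_cast
    linear_combination (-2 * (π:ℂ) * ((1:ℂ)-(Complex.normSq w:ℂ))⁻¹) * Complex.I_sq
  -- identify the circle integral with the real integral
  have h3 : ∀ θ : ℝ, ((f θ : ℝ) : ℂ)
      = deriv (circleMap 0 1) θ • ((circleMap 0 1 θ - -(conj w))⁻¹ • g (circleMap 0 1 θ)) := by
    intro θ
    have hc : circleMap 0 1 θ = Complex.exp (θ * Complex.I) := by simp [circleMap]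
    set e : ℂ := Complex.exp (θ * Complex.I) with hedef
    have he : e * conj e = 1 := by
      rw [← Complex.exp_conj]
      simp only [map_mul, Complex.conj_I, Complex.conj_ofReal]
      rw [← Complex.exp_add]
      simp
    have hene : e ≠ 0 := Complex.exp_ne_zero _
    have hnorme : ‖e‖ = 1 := by
      rw [hedef, Complex.norm_exp_ofReal_mul_I]
    have h1e : (1 : ℂ) + w * e ≠ 0 := hne e (le_of_eq hnorme)
    have hns1 : Complex.normSq (1 + w * e) ≠ 0 := by
      simpa [Complex.normSq_eq_zero] using h1e
    have hec : e + conj w ≠ 0 := by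
      intro h
      have : conj w = -e := by linear_combination h
      have : ‖conj w‖ = 1 := by rw [this]; simpa using hnorme
      rw [RCLike.norm_conj] at this
      linarith
    have key : (1 + w * e) * (e + conj w) = e * ((Complex.normSq (1 + w * e) : ℝ) : ℂ) := by
      rw [← Complex.mul_conj]
      simp only [map_add, map_mul, map_one]
      linear_combination (-(1 + w * e) * (conj w)) * he
    rw [deriv_circleMap, hc, smul_eq_mul, smul_eq_mul]
    simp only [f, g, sub_neg_eq_add]
    push_cast
    have hcast : ((Complex.normSq (1 + w * e) : ℝ) : ℂ) ≠ 0 := Complex.ofReal_ne_zero.mpr hns1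
    rw [← hedef]
    rw [show ((Complex.normSq (1 + w * e) : ℝ) : ℂ) = (1 + w * e) * (e + conj w) / e by
      rw [key, mul_div_cancel_left₀ _ hene]]
    simp only [div_eq_mul_inv, mul_inv, inv_inv]
    linear_combination (e * (e + conj w)⁻¹ * (1 + w * e)⁻¹) * Complex.I_sq
  have h4 : ∫ θ in (0:ℝ)..2*π, f θ = 2 * π / (1 - Complex.normSq w) := by
    have : ((∫ θ in (0:ℝ)..2*π, f θ : ℝ) : ℂ) = ((2 * π / (1 - Complex.normSq w) : ℝ) : ℂ) := by
      rw [← intervalIntegral.integral_ofReal]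
      rw [show (fun θ : ℝ => ((f θ : ℝ) : ℂ)) = fun θ =>
        deriv (circleMap 0 1) θ • ((circleMap 0 1 θ - -(conj w))⁻¹ • g (circleMap 0 1 θ)) from
        funext h3]
      rw [← hval]
      exact cauchy
    exact_mod_cast this
  rw [h1, h2, h4]


theorem disk_polar (f : ℂ → ℝ) (hm : Measurable f) (C : ℝ)
    (hb : ∀ z : ℂ, ‖z‖ < 1 → |f z| ≤ C) :
    ∫ z in {z : ℂ | ‖z‖ < 1}, f z
      = ∫ r in Set.Ioo (0:ℝ) 1, ∫ θ in Set.Ioo (-π) π,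
          r * f (↑r * Complex.exp (↑θ * Complex.I)) := by
  have hsymm : ∀ p : ℝ × ℝ, Complex.polarCoord.symm p = ↑p.1 * Complex.exp (↑p.2 * Complex.I) := by
    intro p
    rw [Complex.polarCoord_symm_apply, Complex.exp_mul_I, ← Complex.ofReal_cos,
      ← Complex.ofReal_sin]
  have hopen : MeasurableSet {z : ℂ | ‖z‖ < 1} := by
    have : {z : ℂ | ‖z‖ < 1} = Metric.ball 0 1 := by
      ext z; simp [Metric.mem_ball, dist_zero_right]
    rw [this]; exact Metric.isOpen_ball.measurableSet
  set F : ℂ → ℝ := ({z : ℂ | ‖z‖ < 1}).indicator f with hF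
  have h1 : ∫ z in {z : ℂ | ‖z‖ < 1}, f z = ∫ z, F z := (integral_indicator hopen).symm
  rw [h1, ← Complex.integral_comp_polarCoord_symm F]
  have hS' : (Ioo (0:ℝ) 1 ×ˢ Ioo (-π) π) ⊆ polarCoord.target := by
    rw [polarCoord_target]
    exact Set.prod_mono (fun x hx => hx.1) (fun x hx => hx)
  have habs : ∀ p : ℝ × ℝ, p.1 ∈ Ioi (0:ℝ) → ‖Complex.polarCoord.symm p‖ = p.1 := by
    intro p hp
    rw [Complex.norm_polarCoord_symm, abs_of_pos hp]
  have h2 : ∫ p in polarCoord.target, p.1 • F (Complex.polarCoord.symm p)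
      = ∫ p in polarCoord.target,
          (Ioo (0:ℝ) 1 ×ˢ Ioo (-π) π).indicator
            (fun p => p.1 * f (Complex.polarCoord.symm p)) p := by
    apply setIntegral_congr_fun (polarCoord.open_target.measurableSet)
    intro p hp
    rw [polarCoord_target] at hp
    by_cases h : p.1 < 1
    · have hmem : p ∈ Ioo (0:ℝ) 1 ×ˢ Ioo (-π) π := ⟨⟨hp.1, h⟩, hp.2⟩
      rw [Set.indicator_of_mem hmem]
      have : Complex.polarCoord.symm p ∈ {z : ℂ | ‖z‖ < 1} := by
        simp only [mem_setOf_eq, habs p hp.1]; exact h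
      simp only [smul_eq_mul, hF]
      rw [Set.indicator_of_mem this]
    · have hmem : p ∉ Ioo (0:ℝ) 1 ×ˢ Ioo (-π) π := by
        intro hc; exact h hc.1.2
      rw [Set.indicator_of_notMem hmem]
      have : Complex.polarCoord.symm p ∉ {z : ℂ | ‖z‖ < 1} := by
        simp only [mem_setOf_eq, habs p hp.1, not_lt]; linarith
      simp only [smul_eq_mul, hF]
      rw [Set.indicator_of_notMem this, mul_zero]
  rw [h2, setIntegral_indicator ((measurableSet_Ioo.prod measurableSet_Ioo)),
    Set.inter_eq_self_of_subset_right hS']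
  -- now Fubini
  have hmsymm : Measurable (fun p : ℝ × ℝ => Complex.polarCoord.symm p) := by
    have : (fun p : ℝ × ℝ => Complex.polarCoord.symm p)
        = fun p => ↑p.1 * Complex.exp (↑p.2 * Complex.I) := funext hsymm
    rw [this]
    fun_prop
  have hmint : Measurable (fun p : ℝ × ℝ => p.1 * f (Complex.polarCoord.symm p)) :=
    measurable_fst.mul (hm.comp hmsymm)
  have hint : IntegrableOn (fun p : ℝ × ℝ => p.1 * f (Complex.polarCoord.symm p))
      (Ioo (0:ℝ) 1 ×ˢ Ioo (-π) π) := by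
    apply Measure.integrableOn_of_bounded
    · rw [Measure.volume_eq_prod ℝ ℝ, Measure.prod_prod]
      exact ENNReal.mul_ne_top (by simp) (by simp)
    · exact hmint.aestronglyMeasurable
    · filter_upwards [ae_restrict_mem ((measurableSet_Ioo.prod measurableSet_Ioo))] with p hp
      have h1 : ‖Complex.polarCoord.symm p‖ < 1 := by
        rw [habs p hp.1.1]; exact hp.1.2
      have h2 := hb _ h1
      rw [Real.norm_eq_abs, abs_mul]
      calc |p.1| * |f (Complex.polarCoord.symm p)| ≤ 1 * |C| := by
            apply mul_le_mul
            · rw [abs_of_pos hp.1.1]; exact le_of_lt hp.1.2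
            · exact le_trans h2 (le_abs_self C)
            · positivity
            · norm_num
        _ = |C| := one_mul _
  rw [Measure.volume_eq_prod ℝ ℝ] at hint ⊢
  rw [setIntegral_prod _ hint]
  apply setIntegral_congr_fun measurableSet_Ioo
  intro r _
  apply setIntegral_congr_fun measurableSet_Ioo
  intro θ _
  simp only []
  rw [hsymm (r, θ)]


theorem ptwise (a z : ℂ) (h : 1 + z * conj a ≠ 0) :
    ‖(z + a) / (1 + z * conj a)‖ ^ 2
      = 1 - (1 - ‖z‖^2) * (1 - ‖a‖^2) * (Complex.normSq (1 + z * conj a))⁻¹ := by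
  have hns : Complex.normSq (1 + z * conj a) ≠ 0 := by
    simpa [Complex.normSq_eq_zero] using h
  have e1 : ∀ u : ℂ, ‖u‖^2 = Complex.normSq u := fun u => by
    rw [Complex.sq_norm]
  rw [norm_div, div_pow, e1, e1, e1, e1]
  rw [eq_sub_iff_add_eq]
  field_simp
  simp only [Complex.normSq_apply, Complex.add_re, Complex.add_im, Complex.mul_re,
    Complex.mul_im, Complex.one_re, Complex.one_im, Complex.conj_re, Complex.conj_im]
  ring
theorem log_bound (t : ℝ) (h0 : 0 < t) (h1 : t < 1) : Real.log (1 - t) ≤ -t - t^2/2 := by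
  set φ : ℝ → ℝ := fun x => -Real.log (1 - x) - x - x^2/2 with hφ
  have hd : ∀ x ∈ Set.Ico (0:ℝ) t, HasDerivAt φ (x^2/(1-x)) x := by
    intro x hx
    have hx1 : 1 - x ≠ 0 := by
      have : x < 1 := lt_of_lt_of_le hx.2 h1.le
      intro h; linarith [this]
    have h1' : HasDerivAt (fun x : ℝ => 1 - x) (-1) x := by
      simpa using (hasDerivAt_id x).const_sub 1
    have h2' : HasDerivAt (fun x : ℝ => Real.log (1 - x)) (-1 / (1-x)) x :=
      h1'.log hx1
    have h3' : HasDerivAt φ (-(-1/(1-x)) - 1 - (2*x)/2) x := by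
      have := ((h2'.neg).sub (hasDerivAt_id x)).sub
        ((hasDerivAt_pow 2 x).div_const 2)
      exact this.congr_deriv (by ring)
    convert h3' using 1
    field_simp
    ring
  have hcont : ContinuousOn φ (Set.Icc 0 t) := by
    apply ContinuousOn.sub
    apply ContinuousOn.sub
    · apply ContinuousOn.neg
      apply ContinuousOn.log
      · fun_prop
      · intro x hx
        have : x < 1 := lt_of_le_of_lt hx.2 h1
        intro h; linarith
    · fun_prop
    · fun_prop
  have hmono : MonotoneOn φ (Set.Icc 0 t) := by
    apply monotoneOn_of_deriv_nonneg (convex_Icc 0 t) hcont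
    · intro x hx
      rw [interior_Icc] at hx
      exact (hd x ⟨hx.1.le, hx.2⟩).differentiableAt.differentiableWithinAt
    · intro x hx
      rw [interior_Icc] at hx
      rw [(hd x ⟨hx.1.le, hx.2⟩).deriv]
      have hx1 : x < 1 := lt_trans hx.2 h1
      have : (0:ℝ) < 1 - x := by linarith
      positivity
  have h2 := hmono (Set.left_mem_Icc.mpr h0.le) (Set.right_mem_Icc.mpr h0.le) h0.le
  simp only [hφ, Real.log_one] at h2
  norm_num at h2
  linarith [h2]


theorem radial (t : ℝ) (h0 : 0 < t) (h1 : t < 1) :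
    ∫ r in Set.Ioo (0:ℝ) 1, (2*π*r - 2*π*(1-t) * (r*(1-r^2)/(1-t*r^2)))
      = π * (2*t^2 - t - (1-t)^2 * Real.log (1-t)) / t^2 := by
  have hpos : ∀ x : ℝ, x ∈ Set.Icc (0:ℝ) 1 → 0 < 1 - t*x^2 := by
    intro x hx
    have hx2 : x^2 ≤ 1 := by nlinarith [hx.1, hx.2]
    nlinarith [mul_nonneg h0.le (sub_nonneg.mpr hx2)]
  have hIoo : ∫ r in Set.Ioo (0:ℝ) 1, (2*π*r - 2*π*(1-t) * (r*(1-r^2)/(1-t*r^2)))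
      = ∫ r in (0:ℝ)..1, (2*π*r - 2*π*(1-t) * (r*(1-r^2)/(1-t*r^2))) := by
    rw [intervalIntegral.integral_of_le zero_le_one]
    exact setIntegral_congr_set Ioo_ae_eq_Ioc
  set F : ℝ → ℝ := fun r => π*r^2 - 2*π*(1-t) *
    ((1/(2*t))*(r^2 + ((1-t)/t) * Real.log (1 - t*r^2))) with hF
  have hderiv : ∀ x ∈ Set.uIcc (0:ℝ) 1,
      HasDerivAt F (2*π*x - 2*π*(1-t) * (x*(1-x^2)/(1-t*x^2))) x := by
    intro x hx
    rw [Set.uIcc_of_le zero_le_one] at hx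
    have hden := hpos x hx
    have hd1 : HasDerivAt (fun r : ℝ => 1 - t*r^2) (-(t*(2*x))) x := by
      simpa using ((hasDerivAt_pow 2 x).const_mul t).const_sub 1
    have hlog : HasDerivAt (fun r : ℝ => Real.log (1 - t*r^2))
        ((-(t*(2*x)))/(1 - t*x^2)) x := hd1.log (ne_of_gt hden)
    have hd2 : HasDerivAt F (π*(2*x) - 2*π*(1-t) *
        ((1/(2*t))*(2*x + ((1-t)/t) * ((-(t*(2*x)))/(1 - t*x^2))))) x := by
      have hp := hasDerivAt_pow 2 x
      have h1' : HasDerivAt (fun r : ℝ => π*r^2) (π*(2*x)) x := by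
        simpa [pow_one] using hp.const_mul π
      have h2' : HasDerivAt (fun r : ℝ => r^2 + ((1-t)/t) * Real.log (1 - t*r^2))
          (2*x + ((1-t)/t) * ((-(t*(2*x)))/(1 - t*x^2))) x := by
        exact (hp.add (hlog.const_mul ((1-t)/t))).congr_deriv (by ring)
      exact h1'.sub ((h2'.const_mul (1/(2*t))).const_mul (2*π*(1-t)))
    convert hd2 using 1
    have hden' : 1 - t*x^2 ≠ 0 := ne_of_gt hden
    have ht0 : t ≠ 0 := ne_of_gt h0
    have hT : t * t⁻¹ = 1 := mul_inv_cancel₀ ht0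
    have hU : (1 - t*x^2) * (1 - t*x^2)⁻¹ = 1 := mul_inv_cancel₀ hden'
    linear_combination (2*π*(1-t)*x*((1-x^2)*(1 - t*x^2)⁻¹ - (1-t)*t⁻¹*(1 - t*x^2)⁻¹)) * hT
      - (2*π*(1-t)*x*t⁻¹) * hU
  have hcont : ContinuousOn (fun r : ℝ => 2*π*r - 2*π*(1-t) * (r*(1-r^2)/(1-t*r^2)))
      (Set.uIcc (0:ℝ) 1) := by
    rw [Set.uIcc_of_le zero_le_one]
    apply ContinuousOn.sub (by fun_prop)
    apply ContinuousOn.mul continuousOn_const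
    apply ContinuousOn.div (by fun_prop) (by fun_prop)
    intro x hx
    exact ne_of_gt (hpos x hx)
  rw [hIoo, intervalIntegral.integral_eq_sub_of_hasDerivAt hderiv
    (hcont.intervalIntegrable)]
  have hlog1 : Real.log (1 - t*(0:ℝ)^2) = 0 := by norm_num
  have ht1 : (1:ℝ) - t*(1:ℝ)^2 = 1 - t := by ring
  simp only [hF, ht1, hlog1]
  have ht : t ≠ 0 := ne_of_gt h0
  field_simp
  ring

theorem inner_int (a : ℂ) (ha : ‖a‖ < 1) (r : ℝ) (hr : r ∈ Set.Ioo (0:ℝ) 1) :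
    ∫ θ in Set.Ioo (-π) π,
        r * ‖((r:ℂ)*Complex.exp (↑θ*Complex.I) + a) / (1 + (r:ℂ)*Complex.exp (↑θ*Complex.I) * conj a)‖^2
      = 2*π*r - 2*π*(1-‖a‖^2) * (r*(1-r^2)/(1-‖a‖^2*r^2)) := by
  have ha0 : (0:ℝ) ≤ ‖a‖ := norm_nonneg a
  set w : ℂ := (r:ℂ) * conj a with hw
  have hnw : ‖w‖ = r * ‖a‖ := by
    rw [hw, norm_mul, Complex.norm_real, Real.norm_eq_abs, abs_of_pos hr.1, RCLike.norm_conj]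
  have hwlt : ‖w‖ < 1 := by rw [hnw]; nlinarith [hr.1, hr.2]
  have hnsw : Complex.normSq w = ‖a‖^2 * r^2 := by
    have : Complex.normSq w = ‖w‖^2 := by rw [Complex.sq_norm]
    rw [this, hnw]; ring
  have hd : (0:ℝ) < 1 - ‖a‖^2*r^2 := by
    have h1 : ‖a‖^2 < 1 := by nlinarith
    have h2 : r^2 ≤ 1 := by nlinarith [hr.1, hr.2]
    have h3 := mul_le_mul_of_nonneg_left h2 (sq_nonneg ‖a‖)
    rw [mul_one] at h3
    linarith
  have hcongr : ∀ θ : ℝ, θ ∈ Set.Ioo (-π) π →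
      r * ‖((r:ℂ)*Complex.exp (↑θ*Complex.I) + a) / (1 + (r:ℂ)*Complex.exp (↑θ*Complex.I) * conj a)‖^2
      = r - (r*(1-r^2)*(1-‖a‖^2)) * (Complex.normSq (1 + w * Complex.exp (↑θ*Complex.I)))⁻¹ := by
    intro θ _
    set z : ℂ := (r:ℂ)*Complex.exp (↑θ*Complex.I) with hz
    have hnz : ‖z‖ = r := by
      rw [hz, norm_mul, Complex.norm_real, Real.norm_eq_abs, abs_of_pos hr.1,
        Complex.norm_exp_ofReal_mul_I, mul_one]
    have hzc : (1:ℂ) + z * conj a = 1 + w * Complex.exp (↑θ*Complex.I) := by rw [hz, hw]; ring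
    have hne : (1:ℂ) + z * conj a ≠ 0 := by
      intro h
      have h1 : ‖z * conj a‖ < 1 := by
        rw [norm_mul, hnz, RCLike.norm_conj]; nlinarith [hr.1, hr.2]
      have h2 : z * conj a = -1 := by linear_combination h
      rw [h2] at h1; simp at h1
    rw [ptwise a z hne, hnz, hzc]
    ring
  rw [setIntegral_congr_fun measurableSet_Ioo hcongr]
  have hnz2 : ∀ θ:ℝ, Complex.normSq (1 + w*Complex.exp (↑θ*Complex.I)) ≠ 0 := by
    intro θ
    rw [Ne, Complex.normSq_eq_zero]
    intro h
    have h1 : ‖w * Complex.exp (↑θ*Complex.I)‖ < 1 := by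
      rw [norm_mul, Complex.norm_exp_ofReal_mul_I, mul_one]
      exact hwlt
    have h2 : w * Complex.exp (↑θ*Complex.I) = -1 := by linear_combination h
    rw [h2] at h1; simp at h1
  have hgc : Continuous (fun θ:ℝ => (Complex.normSq (1 + w*Complex.exp (↑θ*Complex.I)))⁻¹) :=
    Continuous.inv₀ (Complex.continuous_normSq.comp (by fun_prop)) hnz2
  have hgint : IntegrableOn (fun θ:ℝ => (Complex.normSq (1 + w*Complex.exp (↑θ*Complex.I)))⁻¹)
      (Set.Ioo (-π) π) := (hgc.integrableOn_Icc).mono_set Ioo_subset_Icc_self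
  rw [integral_sub (integrableOn_const (C := r) (s := Set.Ioo (-π) π) (μ := volume) measure_Ioo_lt_top.ne enorm_ne_top)
      (hgint.const_mul _), integral_const, MeasureTheory.integral_const_mul,
      circle_int w hwlt, hnsw]
  have hvol : (volume (Set.Ioo (-π) π)).toReal = 2*π := by
    rw [Real.volume_Ioo, ENNReal.toReal_ofReal (by linarith [Real.pi_pos])]
    ring
  rw [measureReal_restrict_apply_univ, measureReal_def, hvol, smul_eq_mul]
  field_simp

theorem moebius_L2_norm (a : ℂ) (ha : ‖a‖ < 1) :
    (a ≠ 0 →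
      (∫ z in {z : ℂ | ‖z‖ < 1}, ‖(z + a) / (1 + z * conj a)‖ ^ 2) =
        Real.pi * (2 * ‖a‖ ^ 4 - ‖a‖ ^ 2 -
          (1 - ‖a‖ ^ 2) ^ 2 * Real.log (1 - ‖a‖ ^ 2)) / ‖a‖ ^ 4) ∧
    ((∫ z in {z : ℂ | ‖z‖ < 1}, ‖z‖ ^ 2) = Real.pi / 2) ∧
    (Real.pi / 2 ≤ ∫ z in {z : ℂ | ‖z‖ < 1}, ‖(z + a) / (1 + z * conj a)‖ ^ 2) ∧
    (a ≠ 0 →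
      Real.pi / 2 < ∫ z in {z : ℂ | ‖z‖ < 1}, ‖(z + a) / (1 + z * conj a)‖ ^ 2) := by
  have hvol2π : (volume (Set.Ioo (-π) π)).toReal = 2*π := by
    rw [Real.volume_Ioo, ENNReal.toReal_ofReal (by linarith [Real.pi_pos])]
    ring
  have part2 : (∫ z in {z : ℂ | ‖z‖ < 1}, ‖z‖ ^ 2) = π / 2 := by
    rw [disk_polar (fun z => ‖z‖^2) (measurable_norm.pow_const 2) 1 (fun z hz => by
      rw [_root_.abs_of_nonneg (sq_nonneg _)]; nlinarith [norm_nonneg z])]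
    have hcongr : ∀ r ∈ Set.Ioo (0:ℝ) 1,
        (∫ θ in Set.Ioo (-π) π, r * ‖(r:ℂ) * Complex.exp (↑θ*Complex.I)‖^2) = 2*π*(r^3) := by
      intro r hr
      have hpt : ∀ θ:ℝ, r * ‖(r:ℂ) * Complex.exp (↑θ*Complex.I)‖^2 = r^3 := by
        intro θ
        rw [norm_mul, Complex.norm_real, Real.norm_eq_abs, abs_of_pos hr.1,
          Complex.norm_exp_ofReal_mul_I, mul_one]
        ring
      simp only [hpt]
      rw [integral_const, measureReal_restrict_apply_univ, measureReal_def, hvol2π, smul_eq_mul]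
    rw [setIntegral_congr_fun measurableSet_Ioo hcongr]
    have hconv : (∫ r in Set.Ioo (0:ℝ) 1, 2*π*(r^3)) = ∫ r in (0:ℝ)..1, 2*π*(r^3) := by
      rw [intervalIntegral.integral_of_le zero_le_one]
      exact setIntegral_congr_set Ioo_ae_eq_Ioc
    rw [hconv, intervalIntegral.integral_const_mul, integral_pow]
    norm_num
    ring
  have main : a ≠ 0 →
      (∫ z in {z : ℂ | ‖z‖ < 1}, ‖(z + a) / (1 + z * conj a)‖ ^ 2)
        = π * (2*(‖a‖^2)^2 - ‖a‖^2 - (1-‖a‖^2)^2 * Real.log (1-‖a‖^2)) / (‖a‖^2)^2 := by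
    intro ha0
    have hmf : Measurable (fun z : ℂ => ‖(z + a)/(1 + z * conj a)‖^2) := by
      apply Measurable.pow_const
      apply Measurable.norm
      exact (measurable_id.add_const a).div ((measurable_id.mul_const (conj a)).const_add 1)
    have hbb : ∀ z:ℂ, ‖z‖<1 → |‖(z + a)/(1 + z * conj a)‖^2| ≤ (2/(1-‖a‖))^2 := by
      intro z hz
      have hca : ‖z * conj a‖ ≤ ‖a‖ := by
        rw [norm_mul, RCLike.norm_conj]
        nlinarith [norm_nonneg a, norm_nonneg z]
      have hden : 1-‖a‖ ≤ ‖1 + z*conj a‖ := by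
        have h1 : ‖(1:ℂ)‖ ≤ ‖1 + z*conj a‖ + ‖z*conj a‖ := by
          have := norm_add_le (1 + z*conj a) (-(z*conj a))
          simpa using this
        simp only [norm_one] at h1
        linarith
      have hnum : ‖z + a‖ ≤ 2 := by
        have := norm_add_le z a
        linarith
      have hq : ‖(z + a)/(1 + z * conj a)‖ ≤ 2/(1-‖a‖) := by
        rw [norm_div]
        apply div_le_div₀ (by norm_num) hnum (by linarith) hden
      rw [_root_.abs_of_nonneg (sq_nonneg _)]
      exact pow_le_pow_left₀ (norm_nonneg _) hq 2
    rw [disk_polar _ hmf _ hbb,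
      setIntegral_congr_fun measurableSet_Ioo (fun r hr => inner_int a ha r hr),
      radial (‖a‖^2) (pow_pos (norm_pos_iff.mpr ha0) 2) (by nlinarith [norm_nonneg a])]
  have strict : a ≠ 0 → π / 2 < ∫ z in {z : ℂ | ‖z‖ < 1}, ‖(z + a) / (1 + z * conj a)‖ ^ 2 := by
    intro ha0
    rw [main ha0]
    set t : ℝ := ‖a‖^2 with ht
    have h0t : 0 < t := pow_pos (norm_pos_iff.mpr ha0) 2
    have h1t : t < 1 := by rw [ht]; nlinarith [norm_nonneg a]
    have hL := log_bound t h0t h1t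
    have ht2 : (0:ℝ) < t^2 := pow_pos h0t 2
    rw [lt_div_iff₀ ht2]
    have h4 : 0 ≤ (1-t)^2 * (-(Real.log (1-t)) - t - t^2/2) :=
      mul_nonneg (sq_nonneg _) (by linarith)
    have hX : t^2/2 < 2*t^2 - t - (1-t)^2 * Real.log (1-t) := by
      nlinarith [h4, pow_pos h0t 4]
    nlinarith [mul_pos Real.pi_pos (sub_pos.mpr hX)]
  refine ⟨?_, part2, ?_, strict⟩
  · intro ha0
    rw [main ha0]
    ring_nf
  · rcases eq_or_ne a 0 with h | h
    · subst h
      have : (∫ z in {z : ℂ | ‖z‖ < 1}, ‖(z + 0) / (1 + z * conj 0)‖ ^ 2)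
          = ∫ z in {z : ℂ | ‖z‖ < 1}, ‖z‖ ^ 2 := by
        apply setIntegral_congr_fun
        · have : {z : ℂ | ‖z‖ < 1} = Metric.ball 0 1 := by
            ext z; simp [Metric.mem_ball, dist_zero_right]
          rw [this]; exact Metric.isOpen_ball.measurableSet
        · intro z _
          simp
      rw [this, part2]
    · exact (strict h).le
end

section
/- Let f be a finite Blaschke product of degree d and p ≥ 1. Then the L^p norm of f over the unit disk satisfies ‖f‖_p^p = ∫_𝔻 |f|^p dA ≥ 2π/(2+dp), with equality if and only if f(z) = e^{iτ}z^d. -/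
open MeasureTheory Complex ComplexConjugate Set Real

-- mean value of log ‖1 - c e^{iθ}‖ over the circle
lemma aux_mean_log_zero (c : ℂ) (hc : ‖c‖ < 1) :
    ∫ θ in Ioo (-π) π, Real.log ‖1 - c * Complex.exp (θ * Complex.I)‖ = 0 := by
  set f : ℂ → ℂ := fun z => Complex.log (1 - c * z) with hf
  have hne : ∀ z : ℂ, ‖z‖ ≤ 1 → 1 - c * z ∈ slitPlane := by
    intro z hz
    left
    have h1 : ‖c * z‖ < 1 := by
      calc ‖c * z‖ = ‖c‖ * ‖z‖ := norm_mul _ _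
        _ ≤ ‖c‖ * 1 := by nlinarith [norm_nonneg c]
        _ < 1 := by linarith
    have := (Complex.abs_re_le_norm (c * z)).trans h1.le
    have h2 : (c*z).re < 1 := lt_of_le_of_lt (le_abs_self _) (lt_of_le_of_lt (Complex.abs_re_le_norm _) h1)
    simp only [Complex.sub_re, Complex.one_re]
    linarith
  have hdiff : DiffContOnCl ℂ f (Metric.ball 0 1) := by
    have hd : Differentiable ℂ (fun z : ℂ => 1 - c * z) := by
      fun_prop
    have : ∀ z ∈ Metric.closedBall (0:ℂ) 1, DifferentiableAt ℂ f z := by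
      intro z hz
      simp only [Metric.mem_closedBall, dist_zero_right] at hz
      exact (Complex.differentiableAt_log (hne z hz)).comp z (hd z)
    refine DiffContOnCl.mk ?_ ?_
    · intro z hz
      exact ((this z (Metric.ball_subset_closedBall hz)).differentiableWithinAt)
    · rw [closure_ball (0:ℂ) one_ne_zero]
      intro z hz
      exact (this z hz).continuousAt.continuousWithinAt
  have key := hdiff.circleIntegral_sub_inv_smul (w := 0) (by simp)
  have hf0 : f 0 = 0 := by simp [hf]
  rw [hf0, smul_zero] at key
  -- unfold circle integral
  rw [circleIntegral] at key
  have hsimp : ∀ θ : ℝ, deriv (circleMap 0 1) θ • ((circleMap 0 1 θ - 0)⁻¹ • f (circleMap 0 1 θ))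
      = Complex.I * f (Complex.exp (θ * Complex.I)) := by
    intro θ
    rw [deriv_circleMap]
    simp only [circleMap, smul_eq_mul, sub_zero, Complex.ofReal_one, one_mul, zero_add]
    rw [mul_comm (Complex.exp (θ * Complex.I)) Complex.I]
    field_simp [Complex.exp_ne_zero]
  simp only [hsimp] at key
  rw [intervalIntegral.integral_const_mul] at key
  have hI : (∫ θ in (0:ℝ)..2*π, f (Complex.exp (θ * Complex.I))) = 0 := by
    rcases mul_eq_zero.1 key with h | h
    · exact absurd h Complex.I_ne_zero
    · exact h
  -- shift the interval
  have hper : Function.Periodic (fun θ : ℝ => f (Complex.exp (θ * Complex.I))) (2*π) := by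
    intro θ
    simp only
    have h2 : ((θ + 2*π : ℝ) : ℂ) * Complex.I = θ * Complex.I + 2*π*Complex.I := by push_cast; ring
    simp only [h2, Complex.exp_add, Complex.exp_two_pi_mul_I, mul_one]
  have hshift := hper.intervalIntegral_add_eq (-π) 0
  have hIπ : (∫ θ in (-π)..(-π+2*π), f (Complex.exp (θ * Complex.I))) = 0 := by
    rw [hshift]; simpa using hI
  have hint : (∫ θ in (-π)..π, f (Complex.exp (θ * Complex.I))) = 0 := by
    have : -π + 2*π = π := by ring
    rwa [this] at hIπ
  -- pass to set integral and take real parts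
  have hle : (-π : ℝ) ≤ π := by linarith [Real.pi_pos]
  rw [intervalIntegral.integral_of_le hle] at hint
  have hcontf : Continuous (fun θ : ℝ => f (Complex.exp (θ * Complex.I))) := by
    rw [continuous_iff_continuousAt]
    intro θ
    have h1 : ContinuousAt (fun θ : ℝ => 1 - c * Complex.exp (θ * Complex.I)) θ := by fun_prop
    exact h1.clog (hne _ (by simp))
  have hInt : IntegrableOn (fun θ : ℝ => f (Complex.exp (θ * Complex.I))) (Ioc (-π) π) :=
    (hcontf.integrableOn_Icc (a := -π) (b := π)).mono_set Ioc_subset_Icc_self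
  have hre := integral_re hInt
  rw [hint] at hre
  simp only [Complex.zero_re, RCLike.re_to_complex] at hre
  rw [setIntegral_congr_set Ioo_ae_eq_Ioc]
  rw [← hre]
  congr 1
  ext θ
  simp [hf, Complex.log_re]

lemma aux_one_sub_ne (c : ℂ) (hc : ‖c‖ < 1) (θ : ℝ) :
    1 - c * Complex.exp (θ * Complex.I) ≠ 0 := by
  intro h
  have h1 : ‖c * Complex.exp (θ * Complex.I)‖ = 1 := by
    have : c * Complex.exp (θ * Complex.I) = 1 := by linear_combination -h
    rw [this]; simp
  rw [norm_mul] at h1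
  simp at h1
  simp [h1] at hc

lemma aux_cont_log (c : ℂ) (hc : ‖c‖ < 1) :
    Continuous (fun θ : ℝ => Real.log ‖1 - c * Complex.exp (θ * Complex.I)‖) := by
  rw [continuous_iff_continuousAt]
  intro θ
  have h1 : ContinuousAt (fun θ : ℝ => ‖1 - c * Complex.exp (θ * Complex.I)‖) θ := by fun_prop
  exact (Real.continuousAt_log (by simpa using norm_ne_zero_iff.2 (aux_one_sub_ne c hc θ))).comp h1

lemma aux_intOn_log (c : ℂ) (hc : ‖c‖ < 1) :
    IntegrableOn (fun θ : ℝ => Real.log ‖1 - c * Complex.exp (θ * Complex.I)‖) (Ioo (-π) π) :=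
  ((aux_cont_log c hc).integrableOn_Icc (a := -π) (b := π)).mono_set Ioo_subset_Icc_self

-- norm factorization for the numerator
lemma aux_num_norm (r : ℝ) (hr0 : 0 < r) (a : ℂ) (θ : ℝ) :
    ‖(r : ℂ) * Complex.exp (θ * Complex.I) - a‖
      = r * ‖1 - (conj a / r) * Complex.exp (θ * Complex.I)‖ := by
  set E := Complex.exp (θ * Complex.I) with hE
  have hEn : ‖E‖ = 1 := by simp [hE]
  have key : (r:ℂ) * E - a = E * conj ((r:ℂ) - conj a * E) := by
    have hconj : conj ((r:ℂ) - conj a * E) = (r:ℂ) - a * Complex.exp (-(θ * Complex.I)) := by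
      simp [map_sub, map_mul, Complex.conj_ofReal, hE, ← Complex.exp_conj]
    rw [hconj]
    have hEE : E * Complex.exp (-(θ * Complex.I)) = 1 := by
      rw [hE, ← Complex.exp_add]; simp
    rw [mul_sub, mul_comm E ((r:ℂ))]
    rw [show E * ((a : ℂ) * Complex.exp (-(θ * Complex.I))) = a * (E * Complex.exp (-(θ * Complex.I))) by ring]
    rw [hEE, mul_one]
  rw [key, norm_mul, hEn, one_mul, RCLike.norm_conj]
  have hfac : (r:ℂ) - conj a * E = (r:ℂ) * (1 - (conj a / r) * E) := by
    have : (r : ℂ) ≠ 0 := by exact_mod_cast hr0.ne'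
    field_simp
  rw [hfac, norm_mul]
  simp [abs_of_pos hr0]

lemma aux_mean_log_num {r : ℝ} (hr0 : 0 < r) {a : ℂ} (hane : ‖a‖ ≠ r) (har : ‖a‖ < 1) :
    ∫ θ in Ioo (-π) π, Real.log ‖(r : ℂ) * Complex.exp (θ * Complex.I) - a‖
      = (2*π) * Real.log (max r ‖a‖) := by
  have hvol : (volume (Ioo (-π) π)).toReal = 2*π := by
    rw [Real.volume_Ioo, ENNReal.toReal_ofReal (by linarith [Real.pi_pos])]
    ring
  rcases lt_or_gt_of_ne hane with hlt | hgt
  · -- ‖a‖ < r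
    have hc : ‖conj a / (r:ℂ)‖ < 1 := by
      rw [norm_div, RCLike.norm_conj]
      simp only [Complex.norm_real, Real.norm_eq_abs, abs_of_pos hr0]
      rw [div_lt_one hr0]; exact hlt
    have heq : ∀ θ : ℝ, Real.log ‖(r : ℂ) * Complex.exp (θ * Complex.I) - a‖
        = Real.log r + Real.log ‖1 - (conj a / r) * Complex.exp (θ * Complex.I)‖ := by
      intro θ
      rw [aux_num_norm r hr0 a θ]
      rw [Real.log_mul hr0.ne' (norm_ne_zero_iff.2 (aux_one_sub_ne _ hc θ))]
    simp only [heq]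
    rw [integral_add (integrableOn_const (μ := volume) (s := Ioo (-π) π) (C := Real.log r) (by simp [Real.volume_Ioo])) (aux_intOn_log _ hc)]
    rw [aux_mean_log_zero _ hc, add_zero, setIntegral_const, smul_eq_mul, measureReal_def, hvol]
    rw [max_eq_left hlt.le]
  · -- r < ‖a‖
    have ha0 : a ≠ 0 := by intro h; rw [h] at hgt; simp at hgt; linarith
    have hc : ‖(r:ℂ) / a‖ < 1 := by
      rw [norm_div]
      simp only [Complex.norm_real, Real.norm_eq_abs, abs_of_pos hr0]
      rw [div_lt_one (norm_pos_iff.2 ha0)]; exact hgt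
    have heq : ∀ θ : ℝ, Real.log ‖(r : ℂ) * Complex.exp (θ * Complex.I) - a‖
        = Real.log ‖a‖ + Real.log ‖1 - ((r:ℂ) / a) * Complex.exp (θ * Complex.I)‖ := by
      intro θ
      have hfac : (r : ℂ) * Complex.exp (θ * Complex.I) - a
          = (-a) * (1 - ((r:ℂ) / a) * Complex.exp (θ * Complex.I)) := by
        field_simp
        ring
      rw [hfac, norm_mul, norm_neg]
      rw [Real.log_mul (by simpa using ha0) (norm_ne_zero_iff.2 (aux_one_sub_ne _ hc θ))]
    simp only [heq]
    rw [integral_add (integrableOn_const (μ := volume) (s := Ioo (-π) π) (C := Real.log ‖a‖) (by simp [Real.volume_Ioo])) (aux_intOn_log _ hc)]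
    rw [aux_mean_log_zero _ hc, add_zero, setIntegral_const, smul_eq_mul, measureReal_def, hvol]
    rw [max_eq_right hgt.le]

lemma aux_num_ne {r : ℝ} (hr0 : 0 < r) {a : ℂ} (hne : ‖a‖ ≠ r) (θ : ℝ) :
    (r : ℂ) * Complex.exp (θ * Complex.I) - a ≠ 0 := by
  intro h
  apply hne
  have : (r:ℂ) * Complex.exp (θ * Complex.I) = a := by linear_combination h
  rw [← this, norm_mul]
  simp [abs_of_pos hr0]

lemma aux_den_rw (r : ℝ) (a : ℂ) (θ : ℝ) :
    1 - (r:ℂ) * Complex.exp (θ * Complex.I) * conj a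
      = 1 - ((r:ℂ) * conj a) * Complex.exp (θ * Complex.I) := by ring

lemma aux_den_norm_lt {r : ℝ} (hr0 : 0 < r) (hr1 : r < 1) {a : ℂ} (ha : ‖a‖ < 1) :
    ‖(r:ℂ) * conj a‖ < 1 := by
  rw [norm_mul, RCLike.norm_conj]
  simp only [Complex.norm_real, Real.norm_eq_abs, abs_of_pos hr0]
  nlinarith [norm_nonneg a]

lemma aux_cont_log_num {r : ℝ} (hr0 : 0 < r) {a : ℂ} (hne : ‖a‖ ≠ r) :
    Continuous (fun θ : ℝ => Real.log ‖(r:ℂ) * Complex.exp (θ * Complex.I) - a‖) := by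
  rw [continuous_iff_continuousAt]
  intro θ
  have h1 : ContinuousAt (fun θ : ℝ => ‖(r:ℂ) * Complex.exp (θ * Complex.I) - a‖) θ := by fun_prop
  exact (Real.continuousAt_log (by simpa using norm_ne_zero_iff.2 (aux_num_ne hr0 hne θ))).comp h1

lemma aux_mean_log_b {r : ℝ} (hr0 : 0 < r) (hr1 : r < 1) {a : ℂ} (ha : ‖a‖ < 1)
    (hne : ‖a‖ ≠ r) :
    ∫ θ in Ioo (-π) π, Real.log
        ‖((r:ℂ) * Complex.exp (θ * Complex.I) - a) /
          (1 - (r:ℂ) * Complex.exp (θ * Complex.I) * conj a)‖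
      = (2*π) * Real.log (max r ‖a‖) := by
  have hcden := aux_den_norm_lt hr0 hr1 ha
  have heq : ∀ θ : ℝ, Real.log
        ‖((r:ℂ) * Complex.exp (θ * Complex.I) - a) /
          (1 - (r:ℂ) * Complex.exp (θ * Complex.I) * conj a)‖
      = Real.log ‖(r:ℂ) * Complex.exp (θ * Complex.I) - a‖
        - Real.log ‖1 - ((r:ℂ) * conj a) * Complex.exp (θ * Complex.I)‖ := by
    intro θ
    rw [norm_div, aux_den_rw,
      Real.log_div (norm_ne_zero_iff.2 (aux_num_ne hr0 hne θ))
        (norm_ne_zero_iff.2 (aux_one_sub_ne _ hcden θ))]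
  simp only [heq]
  rw [integral_sub (((aux_cont_log_num hr0 hne).integrableOn_Icc (a := -π) (b := π)).mono_set
      Ioo_subset_Icc_self) (aux_intOn_log _ hcden)]
  rw [aux_mean_log_num hr0 hne ha, aux_mean_log_zero _ hcden, sub_zero]

lemma aux_circle_jensen (d : ℕ) (a : Fin d → ℂ) (ha : ∀ k, ‖a k‖ < 1) (p : ℝ) (hp : 1 ≤ p)
    {r : ℝ} (hr0 : 0 < r) (hr1 : r < 1) (hner : ∀ k, ‖a k‖ ≠ r) :
    2*π * (∏ k, max r ‖a k‖) ^ p ≤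
      ∫ θ in Ioo (-π) π, ∏ k,
        ‖((r:ℂ) * Complex.exp (θ * Complex.I) - a k) /
          (1 - (r:ℂ) * Complex.exp (θ * Complex.I) * conj (a k))‖ ^ p := by
  classical
  set b : Fin d → ℝ → ℝ := fun k θ =>
    ‖((r:ℂ) * Complex.exp (θ * Complex.I) - a k) /
          (1 - (r:ℂ) * Complex.exp (θ * Complex.I) * conj (a k))‖ with hb
  have hbpos : ∀ k θ, 0 < b k θ := by
    intro k θ
    apply norm_pos_iff.2
    apply div_ne_zero (aux_num_ne hr0 (hner k) θ)
    rw [aux_den_rw]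
    exact aux_one_sub_ne _ (aux_den_norm_lt hr0 hr1 (ha k)) θ
  set g : ℝ → ℝ := fun θ => p * ∑ k, Real.log (b k θ) with hg
  have hexpg : ∀ θ, Real.exp (g θ) = ∏ k, (b k θ) ^ p := by
    intro θ
    rw [hg]
    simp only
    rw [Finset.mul_sum, Real.exp_sum]
    congr 1
    ext k
    rw [Real.rpow_def_of_pos (hbpos k θ), mul_comm]
  have hcontb : ∀ k, Continuous (fun θ => Real.log (b k θ)) := by
    intro k
    have : ∀ θ : ℝ, Real.log (b k θ)
        = Real.log ‖(r:ℂ) * Complex.exp (θ * Complex.I) - a k‖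
          - Real.log ‖1 - ((r:ℂ) * conj (a k)) * Complex.exp (θ * Complex.I)‖ := by
      intro θ
      rw [hb]
      simp only
      rw [norm_div, aux_den_rw,
        Real.log_div (norm_ne_zero_iff.2 (aux_num_ne hr0 (hner k) θ))
          (norm_ne_zero_iff.2 (aux_one_sub_ne _ (aux_den_norm_lt hr0 hr1 (ha k)) θ))]
    simp only [this]
    exact (aux_cont_log_num hr0 (hner k)).sub (aux_cont_log _ (aux_den_norm_lt hr0 hr1 (ha k)))
  have hcontg : Continuous g := by
    apply continuous_const.mul
    exact continuous_finset_sum _ (fun k _ => hcontb k)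
  set μ : Measure ℝ := volume.restrict (Ioo (-π) π) with hμ
  have hvolI : volume (Ioo (-π : ℝ) π) = ENNReal.ofReal (2*π) := by
    rw [Real.volume_Ioo]; congr 1; ring
  have hμuniv : μ univ = ENNReal.ofReal (2*π) := by
    rw [hμ, Measure.restrict_apply_univ, hvolI]
  haveI : IsFiniteMeasure μ := ⟨by rw [hμuniv]; exact ENNReal.ofReal_lt_top⟩
  haveI : NeZero μ := ⟨by
    intro h
    have := hμuniv
    rw [h] at this
    simp only [Measure.coe_zero, Pi.zero_apply] at this
    have h2π : (0:ℝ) < 2*π := by positivity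
    rw [eq_comm, ENNReal.ofReal_eq_zero] at this
    linarith⟩
  have hgi : Integrable g μ :=
    (hcontg.integrableOn_Icc (a := -π) (b := π)).mono_set Ioo_subset_Icc_self
  have hexpgi : Integrable (fun θ => Real.exp (g θ)) μ :=
    ((Real.continuous_exp.comp hcontg).integrableOn_Icc (a := -π) (b := π)).mono_set
      Ioo_subset_Icc_self
  have jensen := convexOn_exp.map_average_le Real.continuous_exp.continuousOn isClosed_univ
    (Filter.Eventually.of_forall (fun x => Set.mem_univ (g x))) hgi (by exact hexpgi)
  -- compute ∫ g ∂μ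
  have hintg : ∫ θ, g θ ∂μ = p * ((2*π) * Real.log (∏ k, max r ‖a k‖)) := by
    rw [hg]
    simp only
    rw [integral_const_mul]
    congr 1
    rw [integral_finset_sum _ (fun k _ =>
      ((hcontb k).integrableOn_Icc (a := -π) (b := π)).mono_set Ioo_subset_Icc_self)]
    rw [Real.log_prod (fun k _ => (lt_of_lt_of_le hr0 (le_max_left _ _)).ne'), Finset.mul_sum]
    congr 1
    ext k
    exact aux_mean_log_b hr0 hr1 (ha k) (hner k)
  have hM : (0:ℝ) < ∏ k, max r ‖a k‖ :=
    Finset.prod_pos (fun k _ => lt_of_lt_of_le hr0 (le_max_left _ _))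
  have havg : ⨍ θ, g θ ∂μ = p * Real.log (∏ k, max r ‖a k‖) := by
    rw [average_eq, hintg, measureReal_def, hμuniv, ENNReal.toReal_ofReal (by positivity), smul_eq_mul]
    have h2π : (0:ℝ) < 2*π := by positivity
    field_simp
  have hexpavg : Real.exp (⨍ θ, g θ ∂μ) = (∏ k, max r ‖a k‖) ^ p := by
    rw [havg, Real.rpow_def_of_pos hM, mul_comm]
  rw [hexpavg] at jensen
  have havg2 : ⨍ θ, Real.exp (g θ) ∂μ = ((2*π))⁻¹ * ∫ θ, Real.exp (g θ) ∂μ := by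
    rw [average_eq, measureReal_def, hμuniv, ENNReal.toReal_ofReal (by positivity), smul_eq_mul]
  rw [havg2] at jensen
  have h2π : (0:ℝ) < 2*π := by positivity
  calc 2*π * (∏ k, max r ‖a k‖) ^ p ≤ 2*π * ((2*π)⁻¹ * ∫ θ, Real.exp (g θ) ∂μ) := by
        apply mul_le_mul_of_nonneg_left jensen h2π.le
    _ = ∫ θ, Real.exp (g θ) ∂μ := by field_simp
    _ = ∫ θ in Ioo (-π) π, ∏ k, (b k θ) ^ p := by
        rw [hμ]
        congr 1
        ext θ
        exact hexpg θ
    _ = _ := rfl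

lemma aux_polar_symm (q : ℝ × ℝ) :
    Complex.polarCoord.symm q = (q.1 : ℂ) * Complex.exp (q.2 * Complex.I) := by
  rw [Complex.polarCoord_symm_apply, Complex.exp_mul_I]
  simp [← Complex.ofReal_cos, ← Complex.ofReal_sin]

lemma aux_polar (h : ℂ → ℝ) :
    ∫ z in {z : ℂ | ‖z‖ < 1}, h z
      = ∫ q in Ioo (0:ℝ) 1 ×ˢ Ioo (-π) π,
          q.1 * h ((q.1 : ℂ) * Complex.exp (q.2 * Complex.I)) := by
  have hset : {z : ℂ | ‖z‖ < 1} = Metric.ball 0 1 := by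
    ext z; simp [Metric.mem_ball, dist_zero_right]
  have key := Complex.integral_comp_polarCoord_symm ((Metric.ball (0:ℂ) 1).indicator h)
  rw [integral_indicator measurableSet_ball] at key
  rw [hset, ← key]
  have htarget : polarCoord.target = Set.Ioi (0:ℝ) ×ˢ Set.Ioo (-π) π :=
    polarCoord_target
  have hmeas : MeasurableSet polarCoord.target :=
    polarCoord.open_target.measurableSet
  have hstep : ∀ q ∈ polarCoord.target,
      q.1 • (Metric.ball (0:ℂ) 1).indicator h (Complex.polarCoord.symm q)
        = (Ioo (0:ℝ) 1 ×ˢ Ioo (-π) π).indicator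
            (fun q => q.1 * h ((q.1 : ℂ) * Complex.exp (q.2 * Complex.I))) q := by
    intro q hq
    rw [htarget] at hq
    obtain ⟨hq1, hq2⟩ := hq
    rw [Set.mem_Ioi] at hq1
    have hnorm : ‖Complex.polarCoord.symm q‖ = q.1 := by
      rw [norm_polarCoord_symm, abs_of_pos hq1]
    by_cases hlt : q.1 < 1
    · rw [Set.indicator_of_mem (by rw [Metric.mem_ball, dist_zero_right, hnorm]; exact hlt),
        Set.indicator_of_mem (by exact ⟨⟨hq1, hlt⟩, hq2⟩)]
      rw [aux_polar_symm, smul_eq_mul]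
    · rw [Set.indicator_of_notMem (by rw [Metric.mem_ball, dist_zero_right, hnorm]; exact hlt),
        Set.indicator_of_notMem (by
          intro hmem
          exact hlt hmem.1.2)]
      rw [smul_zero]
  rw [setIntegral_congr_fun hmeas hstep]
  rw [setIntegral_indicator (by measurability)]
  have hseteq : polarCoord.target ∩ Ioo (0:ℝ) 1 ×ˢ Ioo (-π) π = Ioo (0:ℝ) 1 ×ˢ Ioo (-π) π := by
    rw [htarget]
    ext q
    constructor
    · rintro ⟨-, h3⟩
      exact h3
    · rintro ⟨⟨h1, h2⟩, h3⟩
      exact ⟨⟨h1, h3⟩, ⟨⟨h1, h2⟩, h3⟩⟩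
  rw [hseteq]

-- radial integral computation
lemma aux_radial (q : ℝ) (hq : 0 < q) :
    ∫ r in Ioo (0:ℝ) 1, 2*π * r ^ (q + 1) = 2*π / (q + 2) := by
  rw [integral_const_mul]
  rw [setIntegral_congr_set Ioo_ae_eq_Ioc, ← intervalIntegral.integral_of_le zero_le_one]
  rw [integral_rpow (Or.inl (by linarith))]
  rw [Real.one_rpow, Real.zero_rpow (by linarith)]
  rw [div_eq_mul_inv, mul_assoc]
  rw [show q + 1 + 1 = q + 2 by ring]
  ring

lemma aux_key (d : ℕ) (hd : 0 < d) (s : ℝ) (a : Fin d → ℂ)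
    (ha : ∀ k, ‖a k‖ < 1) (p : ℝ) (hp : 1 ≤ p) :
    (2 * π / (2 + d * p) ≤
      ∫ z in {z : ℂ | ‖z‖ < 1},
        ‖Complex.exp (Complex.I * s) * ∏ k, (z - a k) / (1 - z * conj (a k))‖ ^ p) ∧
    (∀ j, a j ≠ 0 → 2 * π / (2 + d * p) <
      ∫ z in {z : ℂ | ‖z‖ < 1},
        ‖Complex.exp (Complex.I * s) * ∏ k, (z - a k) / (1 - z * conj (a k))‖ ^ p) := by
  classical
  have hp0 : (0:ℝ) < p := lt_of_lt_of_le one_pos hp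
  set H : ℂ → ℝ := fun z =>
    ‖Complex.exp (Complex.I * s) * ∏ k, (z - a k) / (1 - z * conj (a k))‖ ^ p with hH
  have hHprod : ∀ z : ℂ, H z = ∏ k, ‖(z - a k) / (1 - z * conj (a k))‖ ^ p := by
    intro z
    rw [hH]
    simp only
    rw [norm_mul]
    have h1 : ‖Complex.exp (Complex.I * s)‖ = 1 := by
      simp [Complex.norm_exp]
    rw [h1, one_mul, norm_prod]
    rw [← Real.finset_prod_rpow _ _ (fun k _ => norm_nonneg _) p]
  have hden_ne : ∀ z : ℂ, ‖z‖ ≤ 1 → ∀ k, (1 - z * conj (a k)) ≠ 0 := by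
    intro z hz k h
    have h2 : z * conj (a k) = 1 := by linear_combination -h
    have h3 : ‖z * conj (a k)‖ = 1 := by rw [h2]; simp
    rw [norm_mul, RCLike.norm_conj] at h3
    nlinarith [norm_nonneg z, norm_nonneg (a k), ha k]
  -- continuity of H on the closed ball
  have hHcont : ContinuousOn H (Metric.closedBall (0:ℂ) 1) := by
    have hc1 : ContinuousOn
        (fun z : ℂ => Complex.exp (Complex.I * s) * ∏ k, (z - a k) / (1 - z * conj (a k)))
        (Metric.closedBall (0:ℂ) 1) := by
      apply continuousOn_const.mul
      apply continuousOn_finset_prod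
      intro k _
      apply ContinuousOn.div
      · fun_prop
      · fun_prop
      · intro z hz
        rw [Metric.mem_closedBall, dist_zero_right] at hz
        exact hden_ne z hz k
    exact (hc1.norm).rpow_const (fun z _ => Or.inr hp0.le)
  set F : ℝ × ℝ → ℝ := fun q => q.1 * H ((q.1 : ℂ) * Complex.exp (q.2 * Complex.I)) with hF
  have hFcont : ContinuousOn F (Icc (0:ℝ) 1 ×ˢ Icc (-π) π) := by
    apply ContinuousOn.mul continuous_fst.continuousOn
    apply hHcont.comp
    · apply Continuous.continuousOn
      fun_prop
    · intro q hq
      rw [Metric.mem_closedBall, dist_zero_right, norm_mul]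
      have : ‖((q.1 : ℝ) : ℂ)‖ = |q.1| := by simp
      rw [this]
      have h2 : ‖Complex.exp ((q.2:ℂ) * Complex.I)‖ = 1 := by simp
      rw [h2, mul_one, _root_.abs_of_nonneg hq.1.1]
      exact hq.1.2
  have hFint : IntegrableOn F (Ioo (0:ℝ) 1 ×ˢ Ioo (-π) π) :=
    (hFcont.integrableOn_compact (isCompact_Icc.prod isCompact_Icc)).mono_set
      (Set.prod_mono Ioo_subset_Icc_self Ioo_subset_Icc_self)
  have hdisk : ∫ z in {z : ℂ | ‖z‖ < 1}, H z = ∫ q in Ioo (0:ℝ) 1 ×ˢ Ioo (-π) π, F q :=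
    aux_polar H
  set M : ℝ → ℝ := fun r => ∫ θ in Ioo (-π) π, F (r, θ) with hM
  have hfub : ∫ q in Ioo (0:ℝ) 1 ×ˢ Ioo (-π) π, F q = ∫ r in Ioo (0:ℝ) 1, M r := by
    rw [Measure.volume_eq_prod]
    exact setIntegral_prod F (by rwa [← Measure.volume_eq_prod])
  have hMint : IntegrableOn M (Ioo (0:ℝ) 1) := by
    have h := hFint
    rw [IntegrableOn, Measure.volume_eq_prod, ← Measure.prod_restrict] at h
    exact h.integral_prod_left
  -- pointwise lower bound for M
  have hlow : ∀ r : ℝ, 0 < r → r < 1 → (∀ k, ‖a k‖ ≠ r) →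
      r * (2*π * (∏ k, max r ‖a k‖) ^ p) ≤ M r := by
    intro r hr0 hr1 hner
    have hMr : M r = r * ∫ θ in Ioo (-π) π, ∏ k,
        ‖((r:ℂ) * Complex.exp (θ * Complex.I) - a k) /
          (1 - (r:ℂ) * Complex.exp (θ * Complex.I) * conj (a k))‖ ^ p := by
      rw [hM]
      simp only
      rw [← integral_const_mul]
      congr 1
      ext θ
      rw [hF]
      simp only
      rw [hHprod]
    rw [hMr]
    exact mul_le_mul_of_nonneg_left (aux_circle_jensen d a ha p hp hr0 hr1 hner) hr0.le
  -- a.e. properties of r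
  have hrange : ∀ᵐ r : ℝ ∂volume, r ∉ Set.range (fun k => ‖a k‖) :=
    measure_eq_zero_iff_ae_notMem.mp ((Set.finite_range _).measure_zero _)
  set G : ℝ → ℝ := fun r => 2*π * r ^ ((d:ℝ)*p + 1) with hG
  have hdp : (0:ℝ) < (d:ℝ)*p := by
    have : (0:ℝ) < (d:ℝ) := by exact_mod_cast hd
    nlinarith
  have hGle : ∀ r : ℝ, 0 < r → r < 1 → (∀ k, ‖a k‖ ≠ r) → G r ≤ M r := by
    intro r hr0 hr1 hner
    refine le_trans ?_ (hlow r hr0 hr1 hner)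
    have hprodge : r ^ ((d:ℝ)) ≤ ∏ k, max r ‖a k‖ := by
      have h1 : ∏ _k : Fin d, r ≤ ∏ k, max r ‖a k‖ :=
        Finset.prod_le_prod (fun k _ => hr0.le) (fun k _ => le_max_left _ _)
      rw [Finset.prod_const, Finset.card_univ, Fintype.card_fin] at h1
      rwa [Real.rpow_natCast]
    have h2 : r ^ ((d:ℝ)*p) ≤ (∏ k, max r ‖a k‖) ^ p := by
      rw [Real.rpow_mul hr0.le]
      exact Real.rpow_le_rpow (Real.rpow_nonneg hr0.le _) hprodge hp0.le
    have h3 : G r = r * (2*π * r ^ ((d:ℝ)*p)) := by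
      rw [hG]
      simp only
      rw [Real.rpow_add_one hr0.ne']
      ring
    rw [h3]
    apply mul_le_mul_of_nonneg_left _ hr0.le
    apply mul_le_mul_of_nonneg_left h2 (by positivity)
  have haeprop : ∀ᵐ r ∂(volume.restrict (Ioo (0:ℝ) 1)),
      0 < r ∧ r < 1 ∧ ∀ k, ‖a k‖ ≠ r := by
    filter_upwards [ae_restrict_mem measurableSet_Ioo, ae_restrict_of_ae hrange] with r h1 h2
    exact ⟨h1.1, h1.2, fun k heq => h2 ⟨k, heq⟩⟩
  have haeGM : G ≤ᵐ[volume.restrict (Ioo (0:ℝ) 1)] M :=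
    haeprop.mono fun r ⟨h1, h2, h3⟩ => hGle r h1 h2 h3
  have hGcont : Continuous G := by
    apply continuous_const.mul
    rw [continuous_iff_continuousAt]
    intro x
    exact Real.continuousAt_rpow_const x _ (Or.inr (by positivity))
  have hGint : IntegrableOn G (Ioo (0:ℝ) 1) :=
    (hGcont.integrableOn_Icc (a := 0) (b := 1)).mono_set Ioo_subset_Icc_self
  have hGval : ∫ r in Ioo (0:ℝ) 1, G r = 2*π/(2 + d*p) := by
    rw [hG]
    simp only
    rw [aux_radial ((d:ℝ)*p) hdp]
    congr 1
    ring
  have hmain : 2*π/(2 + d*p) ≤ ∫ z in {z : ℂ | ‖z‖ < 1}, H z := by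
    rw [hdisk, hfub, ← hGval]
    exact integral_mono_ae hGint hMint haeGM
  refine ⟨hmain, ?_⟩
  -- strict inequality when some zero is nonzero
  intro j haj
  set c : ℝ := ‖a j‖ with hc
  have hc0 : 0 < c := norm_pos_iff.2 haj
  have hc1 : c < 1 := ha j
  set G' : ℝ → ℝ := fun r => 2*π * (c ^ p * r ^ (((d:ℝ)-1)*p + 1)) with hG'
  have hG'le : ∀ r : ℝ, 0 < r → r < c → (∀ k, ‖a k‖ ≠ r) → G' r ≤ M r := by
    intro r hr0 hrc hner
    refine le_trans ?_ (hlow r hr0 (hrc.trans hc1) hner)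
    have hprodge : c * r ^ (d - 1 : ℕ) ≤ ∏ k, max r ‖a k‖ := by
      have h1 : ∏ k, (if k = j then c else r) ≤ ∏ k, max r ‖a k‖ := by
        apply Finset.prod_le_prod
        · intro k _
          split <;> [exact hc0.le; exact hr0.le]
        · intro k _
          by_cases hkj : k = j
          · rw [if_pos hkj, hkj]
            exact le_max_right _ _
          · rw [if_neg hkj]
            exact le_max_left _ _
      rw [← Finset.mul_prod_erase Finset.univ _ (Finset.mem_univ j), if_pos rfl] at h1
      have h2 : ∏ k ∈ Finset.univ.erase j, (if k = j then c else r) = r ^ (d - 1 : ℕ) := by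
        rw [Finset.prod_congr rfl (fun k hk => if_neg (Finset.ne_of_mem_erase hk))]
        rw [Finset.prod_const, Finset.card_erase_of_mem (Finset.mem_univ j),
          Finset.card_univ, Fintype.card_fin]
      rwa [h2] at h1
    have hcast : ((d - 1 : ℕ) : ℝ) = (d:ℝ) - 1 := by
      have : 1 ≤ d := hd
      push_cast [this]
      ring
    have h2 : c ^ p * r ^ (((d:ℝ)-1)*p) ≤ (∏ k, max r ‖a k‖) ^ p := by
      have h3 : (c * r ^ (d-1:ℕ)) ^ p ≤ (∏ k, max r ‖a k‖) ^ p :=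
        Real.rpow_le_rpow (by positivity) hprodge hp0.le
      rwa [Real.mul_rpow hc0.le (by positivity), ← Real.rpow_natCast r (d-1), hcast,
        ← Real.rpow_mul hr0.le] at h3
    have h3 : G' r = r * (2*π * (c ^ p * r ^ (((d:ℝ)-1)*p))) := by
      rw [hG']
      simp only
      rw [Real.rpow_add_one hr0.ne']
      ring
    rw [h3]
    apply mul_le_mul_of_nonneg_left _ hr0.le
    apply mul_le_mul_of_nonneg_left h2 (by positivity)
  have haeprop' : ∀ᵐ r ∂(volume.restrict (Ioo (0:ℝ) c)),
      0 < r ∧ r < c ∧ ∀ k, ‖a k‖ ≠ r := by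
    filter_upwards [ae_restrict_mem measurableSet_Ioo, ae_restrict_of_ae hrange] with r h1 h2
    exact ⟨h1.1, h1.2, fun k heq => h2 ⟨k, heq⟩⟩
  have hsub : Ioo (0:ℝ) c ⊆ Ioo (0:ℝ) 1 := Ioo_subset_Ioo le_rfl hc1.le
  have hG'cont : Continuous G' := by
    apply continuous_const.mul
    apply continuous_const.mul
    rw [continuous_iff_continuousAt]
    intro x
    have hd1 : (1:ℝ) ≤ (d:ℝ) := by exact_mod_cast hd
    apply Real.continuousAt_rpow_const x _ (Or.inr (by nlinarith))
  have hG'int : IntegrableOn G' (Ioo (0:ℝ) c) :=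
    (hG'cont.integrableOn_Icc (a := 0) (b := c)).mono_set Ioo_subset_Icc_self
  have hMGsub : IntegrableOn (fun r => M r - G r) (Ioo (0:ℝ) 1) := hMint.sub hGint
  -- positivity of ∫ (G' - G) on (0, c)
  have hψpos : ∀ r ∈ Ioo (0:ℝ) c, 0 < G' r - G r := by
    intro r hr
    obtain ⟨hr0, hrc⟩ := hr
    have hrp : r ^ p < c ^ p := Real.rpow_lt_rpow hr0.le hrc hp0
    have hsplit : r ^ ((d:ℝ)*p + 1) = r ^ (((d:ℝ)-1)*p + 1) * r ^ p := by
      rw [← Real.rpow_add hr0]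
      congr 1
      ring
    rw [hG, hG']
    simp only
    rw [hsplit]
    have hrq : (0:ℝ) < r ^ (((d:ℝ)-1)*p + 1) := Real.rpow_pos_of_pos hr0 _
    nlinarith [Real.pi_pos, mul_pos hrq (sub_pos.mpr hrp),
      mul_pos Real.pi_pos (mul_pos hrq (sub_pos.mpr hrp))]
  have hψint : IntegrableOn (fun r => G' r - G r) (Ioo (0:ℝ) c) :=
    hG'int.sub (hGint.mono_set hsub)
  have hψpos' : 0 < ∫ r in Ioo (0:ℝ) c, (G' r - G r) := by
    have hii : IntervalIntegrable (fun r => G' r - G r) volume 0 c :=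
      (hG'cont.sub hGcont).intervalIntegrable 0 c
    have := intervalIntegral.intervalIntegral_pos_of_pos_on hii hψpos hc0
    rwa [intervalIntegral.integral_of_le hc0.le,
      ← setIntegral_congr_set Ioo_ae_eq_Ioc] at this
  -- chain of inequalities
  have hstep1 : ∫ r in Ioo (0:ℝ) c, (G' r - G r) ≤ ∫ r in Ioo (0:ℝ) c, (M r - G r) := by
    apply integral_mono_ae hψint ((hMGsub).mono_set hsub)
    filter_upwards [haeprop'] with r ⟨h1, h2, h3⟩
    have := hG'le r h1 h2 h3
    linarith
  have hstep2 : ∫ r in Ioo (0:ℝ) c, (M r - G r) ≤ ∫ r in Ioo (0:ℝ) 1, (M r - G r) := by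
    apply setIntegral_mono_set hMGsub
    · filter_upwards [haeGM] with r h
      simpa using sub_nonneg.2 h
    · exact HasSubset.Subset.eventuallyLE hsub
  have hfinal : 0 < ∫ r in Ioo (0:ℝ) 1, (M r - G r) := by
    calc (0:ℝ) < ∫ r in Ioo (0:ℝ) c, (G' r - G r) := hψpos'
      _ ≤ ∫ r in Ioo (0:ℝ) c, (M r - G r) := hstep1
      _ ≤ ∫ r in Ioo (0:ℝ) 1, (M r - G r) := hstep2
  rw [integral_sub hMint hGint] at hfinal
  rw [hdisk, hfub, ← hGval]
  linarith

lemma aux_disk_pow (d : ℕ) (hd : 0 < d) (p : ℝ) (hp : 1 ≤ p) :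
    ∫ z in {z : ℂ | ‖z‖ < 1}, (‖z‖^d) ^ p = 2*π/(2 + d*p) := by
  have hp0 : (0:ℝ) < p := lt_of_lt_of_le one_pos hp
  have hdp : (0:ℝ) < (d:ℝ)*p := mul_pos (by exact_mod_cast hd) hp0
  rw [aux_polar (fun z => (‖z‖^d) ^ p)]
  have hcong : ∀ q ∈ Ioo (0:ℝ) 1 ×ˢ Ioo (-π) π,
      (fun q : ℝ × ℝ => q.1 * (‖(q.1:ℂ) * Complex.exp ((q.2:ℂ) * Complex.I)‖^d) ^ p) q
        = (fun q : ℝ × ℝ => q.1 ^ ((d:ℝ)*p + 1)) q := by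
    intro q hq
    have hq1 : 0 < q.1 := hq.1.1
    have hnorm : ‖(q.1:ℂ) * Complex.exp ((q.2:ℂ) * Complex.I)‖ = q.1 := by
      rw [norm_mul]
      simp [_root_.abs_of_pos hq1]
    simp only [hnorm]
    rw [← Real.rpow_natCast q.1 d, ← Real.rpow_mul hq1.le, Real.rpow_add_one hq1.ne']
    ring
  rw [setIntegral_congr_fun (by measurability) hcong]
  have hcont : Continuous (fun r : ℝ => r ^ ((d:ℝ)*p + 1)) := by
    rw [continuous_iff_continuousAt]
    intro x
    exact Real.continuousAt_rpow_const x _ (Or.inr (by positivity))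
  have hint : IntegrableOn (fun q : ℝ × ℝ => q.1 ^ ((d:ℝ)*p+1)) (Ioo (0:ℝ) 1 ×ˢ Ioo (-π) π) :=
    (((hcont.comp continuous_fst).continuousOn).integrableOn_compact
      (isCompact_Icc.prod isCompact_Icc)).mono_set
      (Set.prod_mono Ioo_subset_Icc_self Ioo_subset_Icc_self)
  rw [Measure.volume_eq_prod]
  rw [setIntegral_prod _ (by rwa [← Measure.volume_eq_prod])]
  have hvol : (volume (Ioo (-π) π)).toReal = 2*π := by
    rw [Real.volume_Ioo, ENNReal.toReal_ofReal (by linarith [Real.pi_pos])]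
    ring
  simp only [setIntegral_const, smul_eq_mul, measureReal_def, hvol]
  rw [aux_radial ((d:ℝ)*p) hdp]
  congr 1
  ring

theorem blaschke_lp_norm_bound (d : ℕ) (hd : 0 < d) (s : ℝ) (a : Fin d → ℂ)
    (ha : ∀ k, ‖a k‖ < 1) (p : ℝ) (hp : 1 ≤ p) :
    (2 * Real.pi / (2 + d * p) ≤
      ∫ z in {z : ℂ | ‖z‖ < 1},
        ‖Complex.exp (Complex.I * s) * ∏ k, (z - a k) / (1 - z * conj (a k))‖ ^ p) ∧
    ((∫ z in {z : ℂ | ‖z‖ < 1},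
        ‖Complex.exp (Complex.I * s) * ∏ k, (z - a k) / (1 - z * conj (a k))‖ ^ p) =
        2 * Real.pi / (2 + d * p) ↔
      ∃ τ : ℝ, ∀ z : ℂ,
        Complex.exp (Complex.I * s) * ∏ k, (z - a k) / (1 - z * conj (a k)) =
          Complex.exp (Complex.I * τ) * z ^ d) := by
  obtain ⟨hmain, hstrict⟩ := aux_key d hd s a ha p hp
  refine ⟨hmain, ?_, ?_⟩
  · intro hEq
    have hzero : ∀ k, a k = 0 := by
      intro k
      by_contra hk
      exact absurd hEq (hstrict k hk).ne'
    refine ⟨s, fun z => ?_⟩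
    simp [hzero]
  · rintro ⟨τ, hτ⟩
    have h1 : ∀ z : ℂ,
        ‖Complex.exp (Complex.I * s) * ∏ k, (z - a k) / (1 - z * conj (a k))‖ ^ p
          = (‖z‖^d) ^ p := by
      intro z
      rw [hτ z, norm_mul, norm_pow]
      simp [Complex.norm_exp]
    simp only [h1]
    exact aux_disk_pow d hd p hp
end

section
/- If f : 𝔻 → 𝔻 is holomorphic, onto, and |f(z)| → 1 as |z| → 1, then f is a finite Blaschke product, i.e., f(z) = e^{is}∏_{k=1}^{d}(z−a_k)/(1−z·conj(a_k)) for some d ≥ 1, s ∈ ℝ, and a_1,…,a_d ∈ 𝔻. -/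
open Complex ComplexConjugate Filter Metric Set

namespace FatouAux

lemma blaschke_identity (z a : ℂ) :
    normSq (1 - z * conj a) - normSq (z - a) = (1 - normSq z) * (1 - normSq a) := by
  simp only [normSq_apply, sub_re, sub_im, one_re, one_im, mul_re, mul_im, conj_re, conj_im]
  ring

lemma norm_identity (z a : ℂ) :
    ‖1 - z * conj a‖ ^ 2 - ‖z - a‖ ^ 2 = (1 - ‖z‖ ^ 2) * (1 - ‖a‖ ^ 2) := by
  have := blaschke_identity z a
  simpa only [← Complex.sq_norm] using this

lemma denom_lb {z a : ℂ} : 1 - ‖z‖ * ‖a‖ ≤ ‖1 - z * conj a‖ := by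
  calc 1 - ‖z‖ * ‖a‖ = ‖(1:ℂ)‖ - ‖z * conj a‖ := by
        simp [norm_mul]
    _ ≤ ‖1 - z * conj a‖ := norm_sub_norm_le _ _

lemma blaschke_le_one {z a : ℂ} (hz : ‖z‖ ≤ 1) (ha : ‖a‖ ≤ 1) :
    ‖(z - a) / (1 - z * conj a)‖ ≤ 1 := by
  rw [norm_div]
  have hid := norm_identity z a
  have h2 : (0:ℝ) ≤ (1 - ‖z‖ ^ 2) * (1 - ‖a‖ ^ 2) :=
    mul_nonneg (by nlinarith [norm_nonneg z]) (by nlinarith [norm_nonneg a])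
  have h1 : ‖z - a‖ ≤ ‖1 - z * conj a‖ := by
    rw [← pow_le_pow_iff_left₀ (norm_nonneg _) (norm_nonneg _) (two_ne_zero)]
    nlinarith
  exact div_le_one_of_le₀ h1 (norm_nonneg _)

lemma blaschke_lower {a : ℂ} (ha : ‖a‖ < 1) {z : ℂ} (hz : ‖z‖ < 1) :
    1 - (1 - ‖z‖ ^ 2) * ((1 + ‖a‖) / (1 - ‖a‖)) ≤ ‖(z - a) / (1 - z * conj a)‖ := by
  set u := ‖z - a‖ with hu
  set w := ‖1 - z * conj a‖ with hw
  set t := ‖z‖ with ht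
  set s := ‖a‖ with hs
  have hs0 : 0 ≤ s := norm_nonneg _
  have ht0 : 0 ≤ t := norm_nonneg _
  have hu0 : 0 ≤ u := norm_nonneg _
  have hid : w ^ 2 - u ^ 2 = (1 - t ^ 2) * (1 - s ^ 2) := norm_identity z a
  have hwlb : 1 - t * s ≤ w := denom_lb
  have hw0 : 0 < w := by nlinarith
  have hws : 1 - s ≤ w := by nlinarith
  have ht2 : (0:ℝ) ≤ 1 - t ^ 2 := by nlinarith
  have hs2 : (0:ℝ) ≤ 1 - s ^ 2 := by nlinarith
  have hts : (0:ℝ) ≤ (1 - t ^ 2) * (1 - s ^ 2) := mul_nonneg ht2 hs2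
  have huw : u ≤ w := by
    rw [← pow_le_pow_iff_left₀ hu0 hw0.le (two_ne_zero)]
    linarith
  have hx1 : u / w ≤ 1 := div_le_one_of_le₀ huw hw0.le
  have hx0 : 0 ≤ u / w := div_nonneg hu0 hw0.le
  have hsq : (u / w) ^ 2 ≤ u / w := by nlinarith
  have hval : (u / w) ^ 2 = 1 - (1 - t ^ 2) * (1 - s ^ 2) / w ^ 2 := by
    rw [div_pow]
    field_simp
    nlinarith [hid]
  have hstep : (1 - t ^ 2) * (1 - s ^ 2) / w ^ 2 ≤ (1 - t ^ 2) * ((1 + s) / (1 - s)) := by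
    rw [div_le_iff₀ (by positivity)]
    have hs1 : (0:ℝ) < 1 - s := by linarith
    have hK : (1 + s) / (1 - s) * (1 - s) = 1 + s := div_mul_cancel₀ _ hs1.ne'
    have hw2 : (1 - s) ^ 2 ≤ w ^ 2 := by nlinarith
    have hKnn : (0:ℝ) ≤ (1 + s) / (1 - s) := div_nonneg (by linarith) hs1.le
    have e1 : (1 - t ^ 2) * ((1 + s) / (1 - s)) * (1 - s) ^ 2 = (1 - t ^ 2) * (1 - s ^ 2) := by
      field_simp
      ring
    have key2 : (1 - t ^ 2) * ((1 + s) / (1 - s)) * (1 - s) ^ 2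
        ≤ (1 - t ^ 2) * ((1 + s) / (1 - s)) * w ^ 2 :=
      mul_le_mul_of_nonneg_left hw2 (mul_nonneg ht2 hKnn)
    rw [← e1]
    exact key2
  have : 1 - (1 - t ^ 2) * ((1 + s) / (1 - s)) ≤ (u / w) ^ 2 := by
    rw [hval]; linarith
  calc 1 - (1 - t ^ 2) * ((1 + s) / (1 - s)) ≤ (u / w) ^ 2 := this
    _ ≤ u / w := hsq
    _ = ‖(z - a) / (1 - z * conj a)‖ := (norm_div _ _).symm



noncomputable def F : Filter ℂ := comap (fun z : ℂ => ‖z‖) (nhdsWithin 1 (Iio (1:ℝ)))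

lemma eventually_F_iff {p : ℂ → Prop} :
    (∀ᶠ z in F, p z) ↔ ∃ r : ℝ, r < 1 ∧ ∀ z : ℂ, r < ‖z‖ → ‖z‖ < 1 → p z := by
  rw [F, eventually_comap]
  constructor
  · intro h
    rw [eventually_iff, mem_nhdsLT_iff_exists_Ioo_subset] at h
    obtain ⟨l, hl, hsub⟩ := h
    exact ⟨l, hl, fun z h1 h2 => hsub ⟨h1, h2⟩ z rfl⟩
  · rintro ⟨r, hr, h⟩
    rw [eventually_iff, mem_nhdsLT_iff_exists_Ioo_subset]
    exact ⟨r, hr, fun x hx z hz => h z (hz ▸ hx.1) (hz ▸ hx.2)⟩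

lemma tendsto_norm_F : Tendsto (fun z : ℂ => ‖z‖) F (nhds 1) :=
  tendsto_comap.mono_right nhdsWithin_le_nhds

lemma eventually_norm_lt_one : ∀ᶠ z in F, ‖z‖ < 1 :=
  eventually_F_iff.2 ⟨0, zero_lt_one, fun _ _ h2 => h2⟩

lemma blaschke_tendsto {a : ℂ} (ha : ‖a‖ < 1) :
    Tendsto (fun z : ℂ => ‖(z - a) / (1 - z * conj a)‖) F (nhds 1) := by
  have hcont : Continuous (fun t : ℝ => 1 - (1 - t ^ 2) * ((1 + ‖a‖) / (1 - ‖a‖))) := by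
    continuity
  have hlow : Tendsto (fun z : ℂ => 1 - (1 - ‖z‖ ^ 2) * ((1 + ‖a‖) / (1 - ‖a‖))) F (nhds 1) := by
    have h := (hcont.tendsto 1).comp tendsto_norm_F
    simp only [Function.comp_def] at h
    simpa using h
  refine tendsto_of_tendsto_of_tendsto_of_le_of_le' hlow tendsto_const_nhds ?_ ?_
  · filter_upwards [eventually_norm_lt_one] with z hz using blaschke_lower ha hz
  · filter_upwards [eventually_norm_lt_one] with z hz using blaschke_le_one hz.le ha.le

lemma blaschke_prod_tendsto {d : ℕ} {v : Fin d → ℂ} (hv : ∀ k, ‖v k‖ < 1) :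
    Tendsto (fun z : ℂ => ‖∏ k, (z - v k) / (1 - z * conj (v k))‖) F (nhds 1) := by
  have h := tendsto_finset_prod (Finset.univ : Finset (Fin d))
    (fun k _ => blaschke_tendsto (hv k))
  simp only [Finset.prod_const_one] at h
  have : (fun z : ℂ => ‖∏ k, (z - v k) / (1 - z * conj (v k))‖)
      = fun z : ℂ => ∏ k, ‖(z - v k) / (1 - z * conj (v k))‖ := by
    funext z; rw [norm_prod]
  rw [this]
  exact h

lemma exists_fin_enum (S : Finset ℂ) (m : ℂ → ℕ) :
    ∃ (d : ℕ) (v : Fin d → ℂ), (∀ k, v k ∈ S) ∧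
      ∀ (φ : ℂ → ℂ), ∏ k, φ (v k) = ∏ a ∈ S, φ a ^ m a := by
  classical
  induction S using Finset.induction_on with
  | empty => exact ⟨0, Fin.elim0, fun k => k.elim0, fun φ => by simp⟩
  | @insert a S ha ih =>
    obtain ⟨d, v, hv, hprod⟩ := ih
    refine ⟨m a + d, Fin.append (fun _ => a) v, ?_, ?_⟩
    · intro k
      refine Fin.addCases (fun i => ?_) (fun i => ?_) k
      · rw [Fin.append_left]; exact Finset.mem_insert_self a S
      · rw [Fin.append_right]; exact Finset.mem_insert_of_mem (hv i)
    · intro φ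
      rw [Fin.prod_univ_add]
      simp only [Fin.append_left, Fin.append_right]
      rw [Finset.prod_insert ha, hprod φ, Finset.prod_const, Finset.card_univ,
        Fintype.card_fin]

lemma norm_le_one_of_boundary {h : ℂ → ℂ} (hd : DifferentiableOn ℂ h (ball (0:ℂ) 1))
    (hb : ∀ ε : ℝ, 0 < ε → ∀ᶠ z in F, ‖h z‖ ≤ 1 + ε) :
    ∀ z ∈ ball (0:ℂ) 1, ‖h z‖ ≤ 1 := by
  intro z₀ hz₀
  rw [mem_ball_zero_iff] at hz₀
  refine le_of_forall_pos_le_add ?_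
  intro ε hε
  obtain ⟨r, hr1, hr⟩ := eventually_F_iff.1 (hb ε hε)
  set M : ℝ := max (max r ‖z₀‖) 0 with hM
  have hM1 : M < 1 := by
    rw [hM]
    exact max_lt (max_lt hr1 hz₀) zero_lt_one
  have hM0 : 0 ≤ M := le_max_right _ _
  set ρ : ℝ := (M + 1) / 2 with hρdef
  have hρ0 : 0 < ρ := by rw [hρdef]; linarith
  have hρ1 : ρ < 1 := by rw [hρdef]; linarith
  have hρr : r < ρ := by
    have : r ≤ M := le_trans (le_max_left _ _) (le_max_left _ _)
    rw [hρdef]; linarith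
  have hρz : ‖z₀‖ < ρ := by
    have : ‖z₀‖ ≤ M := le_trans (le_max_right _ _) (le_max_left _ _)
    rw [hρdef]; linarith
  have hsub : closedBall (0:ℂ) ρ ⊆ ball (0:ℂ) 1 := closedBall_subset_ball hρ1
  have hdc : DiffContOnCl ℂ h (ball (0:ℂ) ρ) := by
    apply DifferentiableOn.diffContOnCl
    rw [closure_ball (0:ℂ) hρ0.ne']
    exact hd.mono hsub
  have hfr : ∀ z ∈ frontier (ball (0:ℂ) ρ), ‖h z‖ ≤ 1 + ε := by
    intro z hz
    rw [frontier_ball (0:ℂ) hρ0.ne'] at hz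
    have hnz : ‖z‖ = ρ := by
      simpa [mem_sphere_iff_norm] using hz
    exact hr z (hnz ▸ hρr) (hnz ▸ hρ1)
  exact Complex.norm_le_of_forall_mem_frontier_norm_le isBounded_ball hdc hfr
    (subset_closure (mem_ball_zero_iff.2 hρz))

end FatouAux


open FatouAux in
theorem fatou_blaschke (f : ℂ → ℂ)
    (hf : DifferentiableOn ℂ f (Metric.ball 0 1))
    (hmap : Set.MapsTo f (Metric.ball (0:ℂ) 1) (Metric.ball 0 1))
    (hsurj : Set.SurjOn f (Metric.ball (0:ℂ) 1) (Metric.ball 0 1))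
    (hbdry : ∀ ε : ℝ, 0 < ε → ∃ r : ℝ, r < 1 ∧
      ∀ z : ℂ, r < ‖z‖ → ‖z‖ < 1 → 1 - ε < ‖f z‖) :
    ∃ d : ℕ, 1 ≤ d ∧ ∃ (s : ℝ) (a : Fin d → ℂ), (∀ k, ‖a k‖ < 1) ∧
      ∀ z ∈ Metric.ball (0:ℂ) 1,
        f z = Complex.exp (Complex.I * s) * ∏ k, (z - a k) / (1 - z * conj (a k)) := by
  classical
  have hopen : IsOpen (Metric.ball (0:ℂ) 1) := Metric.isOpen_ball
  have hpre : IsPreconnected (Metric.ball (0:ℂ) 1) := (convex_ball (0:ℂ) 1).isPreconnected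
  have hfa : AnalyticOnNhd ℂ f (Metric.ball (0:ℂ) 1) := hf.analyticOnNhd hopen
  have hhalf : (1/2 : ℂ) ∈ Metric.ball (0:ℂ) 1 := by
    rw [mem_ball_zero_iff]; norm_num
  obtain ⟨z₁, hz₁, hfz₁⟩ := hsurj hhalf
  have hfz₁' : f z₁ ≠ 0 := by rw [hfz₁]; norm_num
  have hnonzero : ¬ Set.EqOn f 0 (Metric.ball (0:ℂ) 1) := fun h => hfz₁' (h hz₁)
  set Z : Set ℂ := {z | z ∈ Metric.ball (0:ℂ) 1 ∧ f z = 0} with hZdef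
  obtain ⟨r₀, hr₀1, hr₀⟩ := hbdry (1/2) (by norm_num)
  set R : ℝ := max r₀ 0 with hR
  have hR1 : R < 1 := max_lt hr₀1 zero_lt_one
  have hZsub : Z ⊆ Metric.closedBall (0:ℂ) R := by
    intro z hz
    rw [Metric.mem_closedBall, dist_zero_right]
    by_contra hc
    push_neg at hc
    have h1 : r₀ < ‖z‖ := lt_of_le_of_lt (le_max_left _ _) hc
    have h2 : ‖z‖ < 1 := mem_ball_zero_iff.1 hz.1
    have h3 := hr₀ z h1 h2
    rw [hz.2] at h3; norm_num at h3
  have hZfin : Z.Finite := by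
    by_contra hinf
    obtain ⟨x, hxK, hacc⟩ := Set.Infinite.exists_accPt_of_subset_isCompact hinf
      (isCompact_closedBall (0:ℂ) R) hZsub
    have hxball : x ∈ Metric.ball (0:ℂ) 1 := by
      rw [mem_ball_zero_iff]
      exact lt_of_le_of_lt (by rwa [Metric.mem_closedBall, dist_zero_right] at hxK) hR1
    have hfreq : ∃ᶠ z in nhdsWithin x {x}ᶜ, f z = 0 := by
      rw [accPt_iff_frequently] at hacc
      rw [frequently_nhdsWithin_iff]
      exact hacc.mono fun y hy => ⟨hy.2.2, hy.1⟩
    exact hnonzero (hfa.eqOn_zero_of_preconnected_of_frequently_eq_zero hpre hxball hfreq)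
  have H : ∀ a : ℂ, ∃ (n : ℕ) (g : ℂ → ℂ), a ∈ Z →
      AnalyticAt ℂ g a ∧ g a ≠ 0 ∧ 1 ≤ n ∧ ∀ᶠ z in nhds a, f z = (z - a) ^ n * g z := by
    intro a
    by_cases haZ : a ∈ Z
    · have hfa' : AnalyticAt ℂ f a := hfa a haZ.1
      have hnot : ¬ ∀ᶠ z in nhds a, f z = 0 := by
        intro hev
        exact hnonzero (hfa.eqOn_zero_of_preconnected_of_eventuallyEq_zero hpre haZ.1 hev)
      obtain ⟨n, g, hg, hgne, hev⟩ := hfa'.exists_eventuallyEq_pow_smul_nonzero_iff.2 hnot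
      have hev' : ∀ᶠ z in nhds a, f z = (z - a) ^ n * g z := by
        filter_upwards [hev] with z hz using by simpa [smul_eq_mul] using hz
      have hn : 1 ≤ n := by
        rcases Nat.eq_zero_or_pos n with h0 | h1
        · exfalso
          have hself := hev'.self_of_nhds
          rw [h0, pow_zero, one_mul, haZ.2] at hself
          exact hgne hself.symm
        · exact h1
      exact ⟨n, g, fun _ => ⟨hg, hgne, hn, hev'⟩⟩
    · exact ⟨1, fun _ => 1, fun h => absurd h haZ⟩
  choose m g hloc using H
  set ZF : Finset ℂ := hZfin.toFinset with hZFdef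
  have hmemZF : ∀ {a : ℂ}, a ∈ ZF ↔ a ∈ Z := fun {a} => hZfin.mem_toFinset
  set P : ℂ → ℂ := fun z => ∏ a ∈ ZF, (z - a) ^ m a with hP
  set G : ℂ → ℂ := fun z =>
    if z ∈ ZF then g z z * (∏ b ∈ ZF.erase z, (z - b) ^ m b)⁻¹ else f z * (P z)⁻¹ with hG
  have hPne : ∀ z : ℂ, z ∉ ZF → P z ≠ 0 := by
    intro z hz
    refine Finset.prod_ne_zero_iff.2 fun b hb => pow_ne_zero _ (sub_ne_zero.2 ?_)
    intro hzb; exact hz (hzb ▸ hb)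
  have hfP : ∀ z ∈ Metric.ball (0:ℂ) 1, f z = P z * G z := by
    intro z hz
    by_cases hzZ : z ∈ ZF
    · have hz0 : f z = 0 := (hmemZF.1 hzZ).2
      have hm1 : 1 ≤ m z := (hloc z (hmemZF.1 hzZ)).2.2.1
      have hPz : P z = 0 := Finset.prod_eq_zero hzZ (by
        rw [sub_self]
        exact zero_pow (by omega))
      rw [hz0, hPz, zero_mul]
    · simp only [hG, if_neg hzZ]
      field_simp [hPne z hzZ]
  have hGanal : AnalyticOnNhd ℂ G (Metric.ball (0:ℂ) 1) := by
    intro z₂ hz₂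
    by_cases hz₂Z : z₂ ∈ ZF
    · obtain ⟨hganal, hgne, hm1, hev⟩ := hloc z₂ (hmemZF.1 hz₂Z)
      have hQ : AnalyticAt ℂ (fun z => g z₂ z * (∏ b ∈ ZF.erase z₂, (z - b) ^ m b)⁻¹) z₂ := by
        apply hganal.mul
        apply AnalyticAt.inv
        · exact Finset.analyticAt_fun_prod _ fun b _ => ((analyticAt_id).sub analyticAt_const).pow _
        · refine Finset.prod_ne_zero_iff.2 fun b hb => pow_ne_zero _ (sub_ne_zero.2 ?_)
          exact fun hcc => (Finset.mem_erase.1 hb).1 hcc.symm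
      have hopen2 : ∀ᶠ z in nhds z₂, z ∉ (ZF.erase z₂ : Finset ℂ) := by
        have hcl : IsClosed (↑(ZF.erase z₂) : Set ℂ) := (Finset.finite_toSet _).isClosed
        have hmem : (↑(ZF.erase z₂) : Set ℂ)ᶜ ∈ nhds z₂ :=
          hcl.isOpen_compl.mem_nhds (by simp)
        filter_upwards [hmem] with y hy
        exact fun hmem2 => hy (Finset.mem_coe.2 hmem2)
      refine hQ.congr ?_
      filter_upwards [hev, hopen2] with z hfz hzE
      by_cases hzz : z = z₂
      · subst hzz
        simp only [hG, if_pos hz₂Z]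
      · have hzZF : z ∉ ZF := by
          intro hmem
          exact hzE (Finset.mem_erase.2 ⟨hzz, hmem⟩)
        simp only [hG, hP, if_neg hzZF]
        rw [hfz, ← Finset.mul_prod_erase ZF (fun a => (z - a) ^ m a) hz₂Z, mul_inv]
        have hx : (z - z₂) ^ m z₂ ≠ 0 := pow_ne_zero _ (sub_ne_zero.2 hzz)
        field_simp
    · have hQ : AnalyticAt ℂ (fun z => f z * (P z)⁻¹) z₂ := by
        refine (hfa z₂ hz₂).mul (AnalyticAt.inv ?_ (hPne z₂ hz₂Z))
        simp only [hP]
        exact Finset.analyticAt_fun_prod _ fun b _ => ((analyticAt_id).sub analyticAt_const).pow _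
      have hopen2 : ∀ᶠ z in nhds z₂, z ∉ ZF := by
        have hcl : IsClosed (↑ZF : Set ℂ) := (Finset.finite_toSet _).isClosed
        have hmem : (↑ZF : Set ℂ)ᶜ ∈ nhds z₂ :=
          hcl.isOpen_compl.mem_nhds (by simpa using hz₂Z)
        filter_upwards [hmem] with y hy
        exact fun hmem2 => hy (Finset.mem_coe.2 hmem2)
      refine hQ.congr ?_
      filter_upwards [hopen2] with z hz
      simp only [hG, if_neg hz]
  have hGne : ∀ z ∈ Metric.ball (0:ℂ) 1, G z ≠ 0 := by
    intro z hz
    by_cases hzZ : z ∈ ZF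
    · obtain ⟨_, hgne, _, _⟩ := hloc z (hmemZF.1 hzZ)
      simp only [hG, if_pos hzZ]
      exact mul_ne_zero hgne (inv_ne_zero (Finset.prod_ne_zero_iff.2 fun b hb =>
        pow_ne_zero _ (sub_ne_zero.2 fun hcc => (Finset.mem_erase.1 hb).1 hcc.symm)))
    · have hfzne : f z ≠ 0 := fun h0 => hzZ (hmemZF.2 ⟨hz, h0⟩)
      simp only [hG, if_neg hzZ]
      exact mul_ne_zero hfzne (inv_ne_zero (hPne z hzZ))
  obtain ⟨d, v, hvZF, hφ⟩ := exists_fin_enum ZF m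
  have hvlt : ∀ k, ‖v k‖ < 1 := fun k =>
    mem_ball_zero_iff.1 (hmemZF.1 (hvZF k)).1
  set BL : ℂ → ℂ := fun z => ∏ k, (z - v k) / (1 - z * conj (v k)) with hBL
  have hPv : ∀ z : ℂ, (∏ k, (z - v k)) = P z := fun z => hφ (fun a => z - a)
  set h : ℂ → ℂ := fun z => G z * ∏ k, (1 - z * conj (v k)) with hh
  have hden : ∀ z : ℂ, ‖z‖ < 1 → ∀ k, (1 - z * conj (v k)) ≠ 0 := by
    intro z hz k hcontra
    have h1 : z * conj (v k) = 1 := by linear_combination -hcontra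
    have h2 : ‖z * conj (v k)‖ < 1 := by
      rw [norm_mul, RCLike.norm_conj]
      nlinarith [norm_nonneg z, norm_nonneg (v k), hvlt k]
    rw [h1] at h2; simp at h2
  have hdenprod : ∀ z : ℂ, ‖z‖ < 1 → (∏ k, (1 - z * conj (v k))) ≠ 0 :=
    fun z hz => Finset.prod_ne_zero_iff.2 fun k _ => hden z hz k
  have hfBL : ∀ z ∈ Metric.ball (0:ℂ) 1, f z = BL z * h z := by
    intro z hz
    have hz' := mem_ball_zero_iff.1 hz
    rw [hfP z hz, hBL, hh]
    simp only
    rw [← hPv z, Finset.prod_div_distrib]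
    field_simp [hdenprod z hz']
  have hhanal : AnalyticOnNhd ℂ h (Metric.ball (0:ℂ) 1) := by
    intro z hz
    exact (hGanal z hz).mul (Finset.analyticAt_fun_prod _ fun k _ =>
      (analyticAt_const.sub ((analyticAt_id).mul analyticAt_const)))
  have hhdiff : DifferentiableOn ℂ h (Metric.ball (0:ℂ) 1) := hhanal.differentiableOn
  have hhne : ∀ z ∈ Metric.ball (0:ℂ) 1, h z ≠ 0 := by
    intro z hz
    simp only [hh]
    exact mul_ne_zero (hGne z hz) (hdenprod z (mem_ball_zero_iff.1 hz))
  have hBLle : ∀ z : ℂ, ‖z‖ < 1 → ‖BL z‖ ≤ 1 := by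
    intro z hz
    rw [hBL]
    refine le_trans (le_of_eq (norm_prod _ _)) ?_
    exact Finset.prod_le_one (fun k _ => norm_nonneg _)
      (fun k _ => blaschke_le_one hz.le (hvlt k).le)
  have hBLt : Filter.Tendsto (fun z => ‖BL z‖) F (nhds 1) := blaschke_prod_tendsto hvlt
  have hub : ∀ ε : ℝ, 0 < ε → ∀ᶠ z in F, ‖h z‖ ≤ 1 + ε := by
    intro ε hε
    have h1 : (1:ℝ)/(1+ε) < 1 := by
      rw [div_lt_one (by linarith)]; linarith
    have hev1 : ∀ᶠ z in F, 1/(1+ε) < ‖BL z‖ := hBLt.eventually (eventually_gt_nhds h1)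
    filter_upwards [hev1, eventually_norm_lt_one] with z hBLz hz1
    have hzball : z ∈ Metric.ball (0:ℂ) 1 := mem_ball_zero_iff.2 hz1
    have hfz : ‖f z‖ ≤ 1 := (mem_ball_zero_iff.1 (hmap hzball)).le
    have heq : ‖f z‖ = ‖BL z‖ * ‖h z‖ := by rw [hfBL z hzball, norm_mul]
    have hkey : ‖h z‖ * (1/(1+ε)) ≤ ‖h z‖ * ‖BL z‖ :=
      mul_le_mul_of_nonneg_left hBLz.le (norm_nonneg _)
    have h3 : ‖h z‖ * (1/(1+ε)) ≤ 1 := by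
      calc ‖h z‖ * (1/(1+ε)) ≤ ‖h z‖ * ‖BL z‖ := hkey
        _ = ‖f z‖ := by rw [heq, mul_comm]
        _ ≤ 1 := hfz
    rw [mul_one_div] at h3
    linarith [(div_le_one (by linarith : (0:ℝ) < 1+ε)).1 h3]
  have hlb : ∀ ε : ℝ, 0 < ε → ∀ᶠ z in F, ‖(h z)⁻¹‖ ≤ 1 + ε := by
    intro ε hε
    have hε' : 0 < ε/(1+ε) := by positivity
    obtain ⟨r, hr1, hr⟩ := hbdry (ε/(1+ε)) hε'
    have hev1 : ∀ᶠ z in F, 1 - ε/(1+ε) < ‖f z‖ := eventually_F_iff.2 ⟨r, hr1, hr⟩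
    filter_upwards [hev1, eventually_norm_lt_one] with z hfz hz1
    have hzball : z ∈ Metric.ball (0:ℂ) 1 := mem_ball_zero_iff.2 hz1
    have heq : ‖f z‖ = ‖BL z‖ * ‖h z‖ := by rw [hfBL z hzball, norm_mul]
    have hble := hBLle z hz1
    have h1e : 1 - ε/(1+ε) = 1/(1+ε) := by field_simp; ring
    rw [h1e] at hfz
    have hhz : 1/(1+ε) < ‖h z‖ := by
      nlinarith [norm_nonneg (h z), norm_nonneg (BL z)]
    rw [norm_inv]
    have hinv := one_div_le_one_div_of_le (by positivity : (0:ℝ) < 1/(1+ε)) hhz.le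
    rw [one_div_one_div] at hinv
    calc ‖h z‖⁻¹ = 1 / ‖h z‖ := (one_div _).symm
      _ ≤ 1 + ε := hinv
  have hh1 : ∀ z ∈ Metric.ball (0:ℂ) 1, ‖h z‖ ≤ 1 := norm_le_one_of_boundary hhdiff hub
  have hh2 : ∀ z ∈ Metric.ball (0:ℂ) 1, ‖(fun z => (h z)⁻¹) z‖ ≤ 1 :=
    norm_le_one_of_boundary (hhdiff.inv (fun z hz => hhne z hz)) (by simpa using hlb)
  have hnorm1 : ∀ z ∈ Metric.ball (0:ℂ) 1, ‖h z‖ = 1 := by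
    intro z hz
    have h2 := hh2 z hz
    simp only [norm_inv] at h2
    have hpos : 0 < ‖h z‖ := norm_pos_iff.2 (hhne z hz)
    have hge : 1 ≤ ‖h z‖ := by
      have hmul := mul_le_mul_of_nonneg_left h2 hpos.le
      rw [mul_inv_cancel₀ hpos.ne', mul_one] at hmul
      exact hmul
    exact le_antisymm (hh1 z hz) hge
  have hmax : IsMaxOn (norm ∘ h) (Metric.ball (0:ℂ) 1) 0 := by
    intro z hz
    simp only [Function.comp_apply, Set.mem_setOf_eq]
    rw [hnorm1 z hz, hnorm1 0 (Metric.mem_ball_self one_pos)]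
  have hconst := Complex.eqOn_of_isPreconnected_of_isMaxOn_norm hpre hopen hhdiff
      (Metric.mem_ball_self one_pos) hmax
  have hcnorm : ‖h 0‖ = 1 := by
    have h0 := hnorm1 0 (Metric.mem_ball_self one_pos)
    exact h0
  have hcexp : Complex.exp (Complex.I * (Complex.arg (h 0) : ℝ)) = h 0 := by
    have habs := Complex.norm_mul_exp_arg_mul_I (h 0)
    rw [hcnorm] at habs
    rw [mul_comm]
    simpa using habs
  obtain ⟨z₀, hz₀ball, hfz₀⟩ := hsurj (Metric.mem_ball_self one_pos)
  rcases Nat.eq_zero_or_pos d with hd0 | hd1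
  · exfalso
    have h1 := hfBL z₀ hz₀ball
    rw [hfz₀] at h1
    subst hd0
    simp only [hBL] at h1
    rw [Finset.univ_eq_empty, Finset.prod_empty, one_mul] at h1
    exact hhne z₀ hz₀ball h1.symm
  · refine ⟨d, hd1, Complex.arg (h 0), v, hvlt, ?_⟩
    intro z hz
    have hzc := hconst hz
    simp only [Function.const_apply] at hzc
    rw [hfBL z hz, hzc, hcexp]
    simp only [hBL]
    exact mul_comm _ _
end
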